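/- arXiv:1111.3217 — 5 statements merged into one kernel-verified Lean document; each statement's English description precedes it below -/
import Mathlib

section
/- Let S = (S,+,⋆) be a finite semifield of characteristic p with identity e and spread set C, and let N_m = {b ∈ S : (a⋆b)⋆c = a⋆(b⋆c) for all a,c ∈ S} be its middle nucleus. Then the map b ↦ φ_b is a bijection from N_m onto the middle-nucleus set N_m(C) = {μ ∈ End_{F_p}(S) : φ∘μ ∈ C for all φ ∈ C}. -/
/-- A finite presemifield of characteristic `p`: a (nontrivial, finite) `ZMod p`-vector
space equipped with a multiplication that is additive (equivalently, `ZMod p`-linear)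
in each argument and has no zero divisors.  For `y : S`, the map `mul.flip y` is the
right-multiplication map `φ_y : x ↦ x ⋆ y`, so the spread set is `Set.range mul.flip`. -/
structure Presemifield (p : ℕ) (S : Type*) [AddCommGroup S] [Module (ZMod p) S] where
  mul : S →ₗ[ZMod p] S →ₗ[ZMod p] S
  eq_zero_or_eq_zero : ∀ x y : S, mul x y = 0 → x = 0 ∨ y = 0

/-- The spread set `C = {φ_y : y ∈ S}` of a presemifield. -/
def Presemifield.spread {p : ℕ} {S : Type*} [AddCommGroup S] [Module (ZMod p) S]
    (M : Presemifield p S) : Set (S →ₗ[ZMod p] S) :=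
  Set.range M.mul.flip

/-- The middle-nucleus set `N_m(D) = {μ : φ∘μ ∈ D for all φ ∈ D}`. -/
def middleNucleusSet {p : ℕ} {S : Type*} [AddCommGroup S] [Module (ZMod p) S]
    (D : Set (S →ₗ[ZMod p] S)) : Set (S →ₗ[ZMod p] S) :=
  {μ | ∀ φ ∈ D, φ ∘ₗ μ ∈ D}

theorem statement2 (p : ℕ) [Fact p.Prime]
    (S : Type*) [AddCommGroup S] [Module (ZMod p) S] [Finite S] [Nontrivial S]
    (M : Presemifield p S) (e : S)
    (he₁ : ∀ x : S, M.mul e x = x) (he₂ : ∀ x : S, M.mul x e = x) :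
    Set.BijOn (fun b : S => M.mul.flip b)
      {b : S | ∀ a c : S, M.mul (M.mul a b) c = M.mul a (M.mul b c)}
      (middleNucleusSet M.spread) := by
  refine ⟨?_, ?_, ?_⟩
  · intro b hb φ hφ
    obtain ⟨c, rfl⟩ := hφ
    exact ⟨M.mul b c, by ext a; exact (hb a c).symm⟩
  · intro b _ b' _ h
    have := congrArg (fun f : S →ₗ[ZMod p] S => f e) h
    simpa [he₁] using this
  · intro μ hμ
    obtain ⟨b, hb⟩ := hμ (M.mul.flip e) ⟨e, rfl⟩
    have hμb : ∀ a : S, μ a = M.mul a b := by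
      intro a
      have := congrArg (fun f : S →ₗ[ZMod p] S => f a) hb
      simpa [he₂] using this.symm
    refine ⟨b, ?_, ?_⟩
    · intro a c
      obtain ⟨d, hd⟩ := hμ (M.mul.flip c) ⟨c, rfl⟩
      have hde : d = M.mul b c := by
        have := congrArg (fun f : S →ₗ[ZMod p] S => f e) hd
        simpa [he₁, hμb] using this
      have := congrArg (fun f : S →ₗ[ZMod p] S => f a) hd
      simpa [hμb, hde] using this.symm
    · ext a; exact (hμb a).symm
end

section
/- Let S = (F_{p^n},+,⋆) be a finite presemifield with x⋆y = F(x,y) additive in each argument, let F_q be a subfield of F_{p^n}, and suppose there exists a field automorphism τ of F_q such that F(λx,y) = F(x, τ(λ)y) for all x,y ∈ F_{p^n} and all λ ∈ F_q. Then for every λ ∈ F_q the scalar map t_λ : x ↦ λx belongs to the middle-nucleus set N_m(C) = {μ ∈ End_{F_p}(F_{p^n}) : φ∘μ ∈ C for all φ ∈ C}, and every element of N_m(C) is F_q-linear. -/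
section Aux
variable {p : ℕ} {S : Type*} [AddCommGroup S] [Module (ZMod p) S] (M : Presemifield p S)

/-- The middle nucleus as a subring of the endomorphism ring. -/
def nucSubring : Subring (Module.End (ZMod p) S) where
  carrier := middleNucleusSet M.spread
  one_mem' := by intro φ hφ; simpa [Module.End.one_eq_id] using hφ
  mul_mem' := by
    intro a b ha hb φ hφ
    have : φ ∘ₗ (a * b) = (φ ∘ₗ a) ∘ₗ b := rfl
    rw [this]
    exact hb _ (ha _ hφ)
  add_mem' := by
    intro a b ha hb φ hφ
    obtain ⟨y₁, hy₁⟩ := ha φ hφ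
    obtain ⟨y₂, hy₂⟩ := hb φ hφ
    exact ⟨y₁ + y₂, by rw [map_add, hy₁, hy₂]; ext x; simp⟩
  zero_mem' := by
    intro φ hφ
    exact ⟨0, by ext x; simp⟩
  neg_mem' := by
    intro a ha φ hφ
    obtain ⟨y, hy⟩ := ha φ hφ
    exact ⟨-y, by rw [map_neg, hy]; ext x; simp⟩

lemma nuc_injective (y₀ : S) (hy₀ : y₀ ≠ 0) {μ : Module.End (ZMod p) S}
    (hμ : μ ∈ middleNucleusSet M.spread) (hμ0 : μ ≠ 0) {z : S} (hz : μ z = 0) : z = 0 := by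
  by_contra hzne
  obtain ⟨w, hw⟩ := hμ (M.mul.flip y₀) ⟨y₀, rfl⟩
  have hw' : ∀ x, M.mul x w = M.mul (μ x) y₀ := fun x => by simpa using DFunLike.congr_fun hw x
  have : M.mul z w = 0 := by rw [hw', hz]; simp
  have hw0 : w = 0 := ((M.eq_zero_or_eq_zero _ _ this).resolve_left hzne)
  apply hμ0
  ext x
  have h2 : M.mul (μ x) y₀ = 0 := by rw [← hw' x, hw0]; simp
  exact (M.eq_zero_or_eq_zero _ _ h2).resolve_right hy₀

end Aux

theorem statement8 (p n : ℕ) [Fact p.Prime] (hn : n ≠ 0)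
    (M : Presemifield p (GaloisField p n))
    (K : Subfield (GaloisField p n)) (τ : K ≃+* K)
    (hτ : ∀ (l : K) (x y : GaloisField p n),
      M.mul ((l : GaloisField p n) * x) y = M.mul x ((τ l : GaloisField p n) * y)) :
    (∀ l : K, LinearMap.mulLeft (ZMod p) (l : GaloisField p n) ∈
      middleNucleusSet M.spread) ∧
    (∀ μ ∈ middleNucleusSet M.spread, ∀ (l : K) (x : GaloisField p n),
      μ ((l : GaloisField p n) * x) = (l : GaloisField p n) * μ x) := by
  have part1 : ∀ l : K, LinearMap.mulLeft (ZMod p) (l : GaloisField p n) ∈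
      middleNucleusSet M.spread := by
    intro l φ hφ
    obtain ⟨y, rfl⟩ := hφ
    refine ⟨(τ l : GaloisField p n) * y, ?_⟩
    ext x
    simpa using (hτ l x y).symm
  refine ⟨part1, ?_⟩
  intro μ hμ l x
  -- set up the subring
  set N := nucSubring M with hN
  haveI : Finite N := by
    haveI : Finite (Module.End (ZMod p) (GaloisField p n)) := by
      exact Finite.of_injective _ (DFunLike.coe_injective)
    exact Subtype.finite
  haveI : Nontrivial N := by
    refine ⟨0, 1, fun h => ?_⟩
    have : (0 : Module.End (ZMod p) (GaloisField p n)) = 1 := congrArg Subtype.val h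
    have h1 : (0 : Module.End (ZMod p) (GaloisField p n)) (1 : GaloisField p n)
        = (1 : Module.End (ZMod p) (GaloisField p n)) 1 := by rw [this]
    simp at h1
  haveI : NoZeroDivisors N := by
    constructor
    intro a b hab
    by_contra hcon
    push_neg at hcon
    obtain ⟨ha, hb⟩ := hcon
    have ha' : (a : Module.End (ZMod p) (GaloisField p n)) ≠ 0 :=
      fun h => ha (Subtype.ext (h.trans (ZeroMemClass.coe_zero N).symm))
    have hb' : (b : Module.End (ZMod p) (GaloisField p n)) ≠ 0 :=
      fun h => hb (Subtype.ext (h.trans (ZeroMemClass.coe_zero N).symm))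
    obtain ⟨x₀, hx₀⟩ : ∃ x₀, (b : Module.End (ZMod p) (GaloisField p n)) x₀ ≠ 0 := by
      by_contra hx
      push_neg at hx
      exact hb' (LinearMap.ext fun x => by simpa using hx x)
    have habv : (a : Module.End (ZMod p) (GaloisField p n))
        ((b : Module.End (ZMod p) (GaloisField p n)) x₀) = 0 := by
      have : ((a * b : N) : Module.End (ZMod p) (GaloisField p n)) x₀ = 0 := by
        rw [hab]; simp
      simpa using this
    exact hx₀ (nuc_injective M 1 one_ne_zero a.2 ha' habv)
  haveI : IsDomain N := NoZeroDivisors.to_isDomain _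
  have hcomm := (Finite.isDomain_to_isField N).mul_comm
  have := hcomm ⟨LinearMap.mulLeft (ZMod p) (l : GaloisField p n), part1 l⟩ ⟨μ, hμ⟩
  have h2 : (LinearMap.mulLeft (ZMod p) (l : GaloisField p n)) ∘ₗ μ
      = μ ∘ₗ (LinearMap.mulLeft (ZMod p) (l : GaloisField p n)) :=
    congrArg Subtype.val this
  have := congrFun (congrArg DFunLike.coe h2.symm) x
  simpa using this
end

section
/- Let S1 = (F_{p^n},+,•) and S2 = (F_{p^n},+,⋆) be finite presemifields and let g1, g2, g3 be bijective F_p-linear maps of F_{p^n}. Then (g1,g2,g3) is an isotopism between S1 and S2 if and only if (ḡ3⁻¹, g2, ḡ1⁻¹) is an isotopism between the transpose presemifields S1^t and S2^t, where ḡ denotes the adjoint of g with respect to the trace form ⟨x,y⟩ = Tr_{F_{p^n}/F_p}(xy). -/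
theorem statement13 (p n : ℕ) [Fact p.Prime] (hn : n ≠ 0)
    (M1 M2 : Presemifield p (GaloisField p n))
    (g1 g2 g3 : GaloisField p n ≃ₗ[ZMod p] GaloisField p n)
    -- `adj φ` is the adjoint `φ̄` of `φ` with respect to the trace form
    -- `⟨x,y⟩ = Tr_{F_{p^n}/F_p}(x·y)`
    (adj : (GaloisField p n →ₗ[ZMod p] GaloisField p n) →
      (GaloisField p n →ₗ[ZMod p] GaloisField p n))
    (hadj : ∀ (φ : GaloisField p n →ₗ[ZMod p] GaloisField p n) (x y : GaloisField p n),
      Algebra.trace (ZMod p) (GaloisField p n) (x * φ y) =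
        Algebra.trace (ZMod p) (GaloisField p n) (adj φ x * y))
    -- `h1 = ḡ1` and `h3 = ḡ3` as invertible maps, so that `h1.symm = ḡ1⁻¹`,
    -- `h3.symm = ḡ3⁻¹`
    (h1 h3 : GaloisField p n ≃ₗ[ZMod p] GaloisField p n)
    (hh1 : (h1 : GaloisField p n →ₗ[ZMod p] GaloisField p n) = adj g1)
    (hh3 : (h3 : GaloisField p n →ₗ[ZMod p] GaloisField p n) = adj g3) :
    (∀ x y : GaloisField p n, M2.mul (g1 x) (g2 y) = g3 (M1.mul x y)) ↔
      (∀ x y : GaloisField p n,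
        adj (M2.mul.flip (g2 y)) (h3.symm x) = h1.symm (adj (M1.mul.flip y) x)) := by
  haveI : Fact (n ≠ 0) := ⟨hn⟩
  set F := GaloisField p n
  set T := Algebra.trace (ZMod p) F with hT
  -- injectivity from nondegeneracy of the trace form
  have key : ∀ a b : F, (∀ z : F, T (a * z) = T (b * z)) → a = b := by
    intro a b h
    have hnd := traceForm_nondegenerate (ZMod p) F
    have hab : a - b = 0 := by
      apply hnd.1
      intro z
      have hz := h z
      simp only [hT] at hz
      simp only [map_sub, LinearMap.sub_apply, Algebra.traceForm_apply]
      rw [hz, sub_self]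
    exact sub_eq_zero.mp hab
  have lemB : ∀ u v : F, T (h1.symm u * g1 v) = T (u * v) := by
    intro u v
    have h' := hadj g1 (h1.symm u) v
    rw [← hh1] at h'
    simpa using h'
  have lemA : ∀ u v : F, T (h3.symm u * g3 v) = T (u * v) := by
    intro u v
    have h' := hadj g3 (h3.symm u) v
    rw [← hh3] at h'
    simpa using h'
  constructor
  · intro H x y
    apply key
    intro z
    obtain ⟨w, rfl⟩ := g1.surjective z
    calc T (adj (M2.mul.flip (g2 y)) (h3.symm x) * g1 w)
        = T (h3.symm x * M2.mul (g1 w) (g2 y)) := by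
          have h' := hadj (M2.mul.flip (g2 y)) (h3.symm x) (g1 w)
          simpa using h'.symm
      _ = T (h3.symm x * g3 (M1.mul w y)) := by rw [H w y]
      _ = T (x * M1.mul w y) := lemA x (M1.mul w y)
      _ = T (adj (M1.mul.flip y) x * w) := by
          have h' := hadj (M1.mul.flip y) x w
          simpa using h'
      _ = T (h1.symm (adj (M1.mul.flip y) x) * g1 w) := (lemB _ w).symm
  · intro H x y
    apply key
    intro z
    obtain ⟨w, rfl⟩ := h3.symm.surjective z
    calc T (M2.mul (g1 x) (g2 y) * h3.symm w)
        = T (h3.symm w * M2.mul (g1 x) (g2 y)) := by rw [mul_comm]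
      _ = T (adj (M2.mul.flip (g2 y)) (h3.symm w) * g1 x) := by
          have h' := hadj (M2.mul.flip (g2 y)) (h3.symm w) (g1 x)
          simpa using h'
      _ = T (h1.symm (adj (M1.mul.flip y) w) * g1 x) := by rw [H w y]
      _ = T (adj (M1.mul.flip y) w * x) := lemB _ x
      _ = T (w * M1.mul x y) := by
          have h' := hadj (M1.mul.flip y) w x
          simpa using h'.symm
      _ = T (h3.symm w * g3 (M1.mul x y)) := (lemA w _).symm
      _ = T (g3 (M1.mul x y) * h3.symm w) := by rw [mul_comm]
end

section
/- Let F_q be a subfield of F_{p^n} and let S1 = (F_{p^n},+,•) and S2 = (F_{p^n},+,⋆) be finite presemifields whose multiplications are F_q-bilinear (equivalently, whose spread sets are contained in End_{F_q}(F_{p^n})). If (g1,g2,g3) is an isotopism between S1 and S2, then there exists an integer i with 0 ≤ i < k (where q = p^k) such that g1(λx) = λ^{p^i}·g1(x) and g3(λx) = λ^{p^i}·g3(x) for all λ ∈ F_q and all x ∈ F_{p^n}; that is, g1 and g3 are F_q-semilinear maps with the same companion automorphism x ↦ x^{p^i} of F_q. -/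
set_option maxHeartbeats 1000000
set_option synthInstance.maxHeartbeats 200000


theorem statement14 (p n k : ℕ) [Fact p.Prime] (hn : n ≠ 0)
    (M1 M2 : Presemifield p (GaloisField p n))
    -- `K` is the subfield `F_q` of `F_{p^n}`, with `q = p^k`
    (K : Subfield (GaloisField p n)) (hK : Nat.card K = p ^ k)
    -- the multiplications of both presemifields are `F_q`-bilinear
    -- (equivalently, the spread sets lie in `End_{F_q}(F_{p^n})`)
    (hbil1 : ∀ (l : K) (x y : GaloisField p n),
      M1.mul ((l : GaloisField p n) * x) y = (l : GaloisField p n) * M1.mul x y ∧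
      M1.mul x ((l : GaloisField p n) * y) = (l : GaloisField p n) * M1.mul x y)
    (hbil2 : ∀ (l : K) (x y : GaloisField p n),
      M2.mul ((l : GaloisField p n) * x) y = (l : GaloisField p n) * M2.mul x y ∧
      M2.mul x ((l : GaloisField p n) * y) = (l : GaloisField p n) * M2.mul x y)
    -- `(g1,g2,g3)` is an isotopism between `M1` and `M2`
    (g1 g2 g3 : GaloisField p n ≃ₗ[ZMod p] GaloisField p n)
    (hiso : ∀ x y : GaloisField p n, M2.mul (g1 x) (g2 y) = g3 (M1.mul x y)) :
    ∃ i : ℕ, i < k ∧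
      ∀ (l : K) (x : GaloisField p n),
        g1 ((l : GaloisField p n) * x) = (l : GaloisField p n) ^ p ^ i * g1 x ∧
        g3 ((l : GaloisField p n) * x) = (l : GaloisField p n) ^ p ^ i * g3 x := by
  classical
  set V := GaloisField p n
  haveI : Fintype V := Fintype.ofFinite V
  haveI : Fintype K := Fintype.ofFinite K
  have hp1 : 1 < p := (Fact.out : p.Prime).one_lt
  have hp0 : p ≠ 0 := (Fact.out : p.Prime).ne_zero
  have hcardK : Fintype.card K = p ^ k := by
    rw [← Nat.card_eq_fintype_card]; exact hK
  have hk0 : k ≠ 0 := by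
    intro h
    rw [h, pow_zero] at hcardK
    have : (1 : ℕ) < Fintype.card K := Fintype.one_lt_card
    omega
  -- injectivity of the multiplications in each slot
  have injM2r : ∀ w : V, w ≠ 0 → Function.Injective (fun z : V => M2.mul z w) := by
    intro w hw z1 z2 h
    have h0 : M2.mul (z1 - z2) w = 0 := by
      rw [map_sub, LinearMap.sub_apply]
      simpa using sub_eq_zero.mpr h
    rcases M2.eq_zero_or_eq_zero _ _ h0 with h' | h'
    · exact sub_eq_zero.mp h'
    · exact absurd h' hw
  have injM2l : ∀ z : V, z ≠ 0 → Function.Injective (fun w : V => M2.mul z w) := by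
    intro z hz w1 w2 h
    have h0 : M2.mul z (w1 - w2) = 0 := by
      rw [map_sub]
      simpa using sub_eq_zero.mpr h
    rcases M2.eq_zero_or_eq_zero _ _ h0 with h' | h'
    · exact absurd h' hz
    · exact sub_eq_zero.mp h'
  have injM1r : ∀ y : V, y ≠ 0 → Function.Injective (fun z : V => M1.mul z y) := by
    intro y hy z1 z2 h
    have h0 : M1.mul (z1 - z2) y = 0 := by
      rw [map_sub, LinearMap.sub_apply]
      simpa using sub_eq_zero.mpr h
    rcases M1.eq_zero_or_eq_zero _ _ h0 with h' | h'
    · exact sub_eq_zero.mp h'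
    · exact absurd h' hy
  have surjM1r : Function.Surjective (fun z : V => M1.mul z 1) :=
    Finite.injective_iff_surjective.mp (injM1r 1 one_ne_zero)
  -- the key isotopism identity
  have keyI : ∀ (l : K) (x y : V),
      M2.mul (g1 ((l : V) * x)) (g2 y) = M2.mul (g1 x) (g2 ((l : V) * y)) := by
    intro l x y
    rw [hiso, hiso, (hbil1 l x y).1, ← (hbil1 l x y).2]
  have hg11 : g1 (1 : V) ≠ 0 := fun h =>
    one_ne_zero (g1.injective (by rw [h, map_zero]))
  -- generator of Kˣ
  obtain ⟨g, hg⟩ := IsCyclic.exists_generator (α := Kˣ)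
  set g0 : K := (g : K) with hg0def
  have hgen : ∀ l : K, l ≠ 0 → ∃ m : ℕ, l = g0 ^ m := by
    intro l hl
    obtain ⟨m, hm⟩ := (mem_powers_iff_mem_zpowers).mpr (hg (IsUnit.mk0 l hl).unit)
    refine ⟨m, ?_⟩
    have h2 := congrArg (Units.val (α := K)) hm
    simp only [Units.val_pow_eq_pow_val, IsUnit.unit_spec] at h2
    exact h2.symm
  -- K-semilinearity of translated companion maps
  have hKlin : ∀ (l μ : K) (t : V),
      g2 ((l : V) * g2.symm ((μ : V) * t)) = (μ : V) * g2 ((l : V) * g2.symm t) := by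
    intro l μ t
    refine injM2l (g1 1) hg11 ?_
    show M2.mul (g1 1) (g2 ((l : V) * g2.symm ((μ : V) * t)))
        = M2.mul (g1 1) ((μ : V) * g2 ((l : V) * g2.symm t))
    calc M2.mul (g1 1) (g2 ((l : V) * g2.symm ((μ : V) * t)))
        = M2.mul (g1 ((l : V) * 1)) (g2 (g2.symm ((μ : V) * t))) :=
          (keyI l 1 (g2.symm ((μ : V) * t))).symm
      _ = M2.mul (g1 ((l : V) * 1)) ((μ : V) * t) := by rw [g2.apply_symm_apply]
      _ = (μ : V) * M2.mul (g1 ((l : V) * 1)) t := (hbil2 μ _ t).2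
      _ = (μ : V) * M2.mul (g1 ((l : V) * 1)) (g2 (g2.symm t)) := by
          rw [g2.apply_symm_apply]
      _ = (μ : V) * M2.mul (g1 1) (g2 ((l : V) * g2.symm t)) := by
          rw [keyI l 1 (g2.symm t)]
      _ = M2.mul (g1 1) ((μ : V) * g2 ((l : V) * g2.symm t)) := ((hbil2 μ _ _).2).symm
  -- the K-linear endomorphism F
  let F : Module.End K V :=
    { toFun := fun w => g2 ((g0 : V) * g2.symm w)
      map_add' := by
        intro a b
        show g2 ((g0 : V) * g2.symm (a + b))
            = g2 ((g0 : V) * g2.symm a) + g2 ((g0 : V) * g2.symm b)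
        rw [map_add, mul_add, map_add]
      map_smul' := by
        intro μ w
        simp only [RingHom.id_apply]
        show g2 ((g0 : V) * g2.symm ((μ : V) * w)) = (μ : V) * g2 ((g0 : V) * g2.symm w)
        exact hKlin g0 μ w }
  have hFapp : ∀ w : V, F w = g2 ((g0 : V) * g2.symm w) := fun w => rfl
  have hFsmul : ∀ (μ : K) (w : V), F ((μ : V) * w) = (μ : V) * F w := by
    intro μ w
    exact F.map_smul μ w
  have hFpow : ∀ (m : ℕ) (w : V), (F ^ m) w = g2 (((g0 ^ m : K) : V) * g2.symm w) := by
    intro m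
    induction m with
    | zero =>
      intro w
      simp [Module.End.one_apply]
    | succ m ih =>
      intro w
      rw [pow_succ, Module.End.mul_apply, ih (F w), hFapp, g2.symm_apply_apply]
      congr 1
      push_cast
      ring
  have hFq : F ^ (p ^ k) = F := by
    apply LinearMap.ext
    intro w
    rw [hFpow]
    have hgq : g0 ^ (p ^ k) = g0 := by
      rw [← hcardK]; exact FiniteField.pow_card g0
    rw [hgq, hFapp]
  -- eigenvalue of F in K via the splitting of X^q - X
  have hroots : (Polynomial.X ^ (p ^ k) - Polynomial.X : Polynomial K).roots
      = Finset.univ.val := by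
    have := FiniteField.roots_X_pow_card_sub_X K
    rwa [hcardK] at this
  have h1q : 1 < p ^ k := by
    rw [← hcardK]; exact Fintype.one_lt_card
  have hdeg : (Polynomial.X ^ (p ^ k) - Polynomial.X : Polynomial K).natDegree = p ^ k :=
    FiniteField.X_pow_card_sub_X_natDegree_eq K h1q
  have hsplit : (Polynomial.X ^ (p ^ k) - Polynomial.X : Polynomial K).Splits := by
    rw [Polynomial.splits_iff_card_roots, hroots, hdeg, ← hcardK]
    rfl
  have hXne : (Polynomial.X ^ (p ^ k) - Polynomial.X : Polynomial K) ≠ 0 :=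
    FiniteField.X_pow_card_sub_X_ne_zero K h1q
  haveI : Module.Finite K V := Module.Finite.of_finite
  have hint : IsIntegral K F := Algebra.IsIntegral.isIntegral F
  have hFzero : Polynomial.aeval F ((Polynomial.X ^ (p ^ k) - Polynomial.X : Polynomial K)) = 0 := by
    rw [map_sub, map_pow, Polynomial.aeval_X, hFq, sub_self]
  have hdvd : minpoly K F ∣ (Polynomial.X ^ (p ^ k) - Polynomial.X) :=
    minpoly.dvd K F hFzero
  have hsplitmin : (minpoly K F).Splits :=
    hsplit.of_dvd hXne hdvd
  obtain ⟨c, hc⟩ := hsplitmin.exists_eval_eq_zero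
    (ne_of_gt (minpoly.degree_pos hint))

  have heig : F.HasEigenvalue c := Module.End.hasEigenvalue_of_isRoot hc
  obtain ⟨w, hwvec⟩ := heig.exists_hasEigenvector
  have hw : w ≠ 0 := hwvec.2
  have hweig : F w = (c : V) * w := by
    rw [hwvec.apply_eq_smul]
    rfl
  -- eigenvalue powers
  have heigpow : ∀ m : ℕ, g2 (((g0 ^ m : K) : V) * g2.symm w) = ((c ^ m : K) : V) * w := by
    intro m
    rw [← hFpow]
    induction m with
    | zero => simp [Module.End.one_apply]
    | succ m ih =>
      rw [pow_succ', Module.End.mul_apply, ih]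
      calc F (((c ^ m : K) : V) * w) = ((c ^ m : K) : V) * F w := hFsmul (c ^ m) w
        _ = ((c ^ m : K) : V) * ((c : V) * w) := by rw [hweig]
        _ = ((c ^ (m + 1) : K) : V) * w := by push_cast [pow_succ]; ring
  -- g1 is semilinear with companion g0^m ↦ c^m
  have hu : ∀ (m : ℕ) (x : V),
      g1 (((g0 ^ m : K) : V) * x) = ((c ^ m : K) : V) * g1 x := by
    intro m x
    refine injM2r w hw ?_
    show M2.mul (g1 (((g0 ^ m : K) : V) * x)) w = M2.mul (((c ^ m : K) : V) * g1 x) w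
    calc M2.mul (g1 (((g0 ^ m : K) : V) * x)) w
        = M2.mul (g1 (((g0 ^ m : K) : V) * x)) (g2 (g2.symm w)) := by
          rw [g2.apply_symm_apply]
      _ = M2.mul (g1 x) (g2 (((g0 ^ m : K) : V) * g2.symm w)) := keyI (g0 ^ m) x (g2.symm w)
      _ = M2.mul (g1 x) (((c ^ m : K) : V) * w) := by rw [heigpow]
      _ = ((c ^ m : K) : V) * M2.mul (g1 x) w := (hbil2 (c ^ m) _ w).2
      _ = M2.mul (((c ^ m : K) : V) * g1 x) w := ((hbil2 (c ^ m) _ w).1).symm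
  -- the companion function τ
  have htau : ∀ l : K, ∃ t : K, ∀ x : V, g1 ((l : V) * x) = (t : V) * g1 x := by
    intro l
    rcases eq_or_ne l 0 with rfl | hl
    · exact ⟨0, fun x => by simp⟩
    · obtain ⟨m, rfl⟩ := hgen l hl
      exact ⟨c ^ m, hu m⟩
  choose τ hτ using htau
  have huniq : ∀ (l t : K), (∀ x : V, g1 ((l : V) * x) = (t : V) * g1 x) → τ l = t := by
    intro l t ht
    have h1 := hτ l 1
    have h2 := ht 1
    have h3 : ((τ l : K) : V) = (t : V) := mul_right_cancel₀ hg11 (h1.symm.trans h2)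
    exact Subtype.coe_injective h3
  have hτ1 : τ 1 = 1 := huniq 1 1 (fun x => by simp)
  have hτ0 : τ 0 = 0 := huniq 0 0 (fun x => by simp)
  have hτmul : ∀ a b : K, τ (a * b) = τ a * τ b := by
    intro a b
    apply huniq
    intro x
    have h1 : (((a * b : K)) : V) * x = (a : V) * ((b : V) * x) := by push_cast; ring
    rw [h1, hτ a, hτ b]
    push_cast
    ring
  have hτadd : ∀ a b : K, τ (a + b) = τ a + τ b := by
    intro a b
    apply huniq
    intro x
    have h1 : (((a + b : K)) : V) * x = (a : V) * x + (b : V) * x := by push_cast; ring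
    rw [h1, map_add, hτ a, hτ b]
    push_cast
    ring
  have hτg0 : τ g0 = c := huniq g0 c (by
    intro x
    have := hu 1 x
    simpa using this)
  let τR : K →+* K :=
    { toFun := τ
      map_one' := hτ1
      map_mul' := hτmul
      map_zero' := hτ0
      map_add' := hτadd }
  -- the polynomial P = ∏_{i<k} (X - g0^{p^i}) has coefficients fixed by τ
  set P : Polynomial K := ∏ i ∈ Finset.range k, (Polynomial.X - Polynomial.C (g0 ^ p ^ i))
    with hPdef
  have hfac : ∀ i : ℕ, (Polynomial.X - Polynomial.C (g0 ^ p ^ i)).map (frobenius K p)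
      = Polynomial.X - Polynomial.C (g0 ^ p ^ (i + 1)) := by
    intro i
    rw [Polynomial.map_sub, Polynomial.map_X, Polynomial.map_C]
    congr 1
    rw [frobenius_def, ← pow_mul, ← pow_succ]
  have hgq : g0 ^ (p ^ k) = g0 := by
    rw [← hcardK]; exact FiniteField.pow_card g0
  have hfrobP : P.map (frobenius K p) = P := by
    rw [hPdef, Polynomial.map_prod]
    calc (∏ i ∈ Finset.range k, (Polynomial.X - Polynomial.C (g0 ^ p ^ i)).map
          (frobenius K p))
        = ∏ i ∈ Finset.range k, (Polynomial.X - Polynomial.C (g0 ^ p ^ (i + 1))) :=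
          Finset.prod_congr rfl fun i _ => hfac i
      _ = ∏ i ∈ Finset.range k, (Polynomial.X - Polynomial.C (g0 ^ p ^ i)) := by
          obtain ⟨k', rfl⟩ := Nat.exists_eq_succ_of_ne_zero hk0
          rw [Finset.prod_range_succ, Finset.prod_range_succ'
            (fun i => Polynomial.X - Polynomial.C (g0 ^ p ^ i))]
          congr 1
          rw [hgq, pow_zero, pow_one]
  haveI : CharP K p := Subfield.charP K p
  have hcoeff : ∀ j : ℕ, τ (P.coeff j) = P.coeff j := by
    intro j
    have hfix : (P.coeff j) ^ p = P.coeff j := by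
      have h1 := congrArg (fun Q : Polynomial K => Q.coeff j) hfrobP
      simpa [Polynomial.coeff_map, frobenius_def] using h1
    set a := P.coeff j with hadef
    have hXne : (Polynomial.X ^ p - Polynomial.X : Polynomial K) ≠ 0 :=
      FiniteField.X_pow_card_sub_X_ne_zero K hp1
    have hroot : a ∈ (Polynomial.X ^ p - Polynomial.X : Polynomial K).roots := by
      rw [Polynomial.mem_roots hXne]
      simp [Polynomial.IsRoot.def, hfix]
    have hS : (Finset.range p).image (Nat.cast : ℕ → K)
        ⊆ (Polynomial.X ^ p - Polynomial.X : Polynomial K).roots.toFinset := by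
      intro x hx
      obtain ⟨m, _, rfl⟩ := Finset.mem_image.mp hx
      rw [Multiset.mem_toFinset, Polynomial.mem_roots hXne]
      have : ((m : K)) ^ p = (m : K) := by
        have := map_natCast (frobenius K p) m
        rwa [frobenius_def] at this
      simp [Polynomial.IsRoot.def, this]
    have hcardS : ((Finset.range p).image (Nat.cast : ℕ → K)).card = p := by
      rw [Finset.card_image_of_injOn, Finset.card_range]
      intro x hx y hy hxy
      exact CharP.natCast_injOn_Iio K p (by simpa using hx) (by simpa using hy) hxy
    have hcardroots : ((Polynomial.X ^ p - Polynomial.X :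
        Polynomial K).roots.toFinset).card ≤ p := by
      refine le_trans (Multiset.toFinset_card_le _) ?_
      have h2 := Polynomial.card_roots' (Polynomial.X ^ p - Polynomial.X : Polynomial K)
      rwa [FiniteField.X_pow_card_sub_X_natDegree_eq K hp1] at h2
    have hSeq : (Finset.range p).image (Nat.cast : ℕ → K)
        = (Polynomial.X ^ p - Polynomial.X : Polynomial K).roots.toFinset :=
      Finset.eq_of_subset_of_card_le hS (by rw [hcardS]; exact hcardroots)
    have haS : a ∈ (Finset.range p).image (Nat.cast : ℕ → K) := by
      rw [hSeq]
      exact Multiset.mem_toFinset.mpr hroot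
    obtain ⟨m, _, hma⟩ := Finset.mem_image.mp haS
    rw [← hma]
    exact map_natCast τR m
  have hmapP : P.map τR = P := Polynomial.ext fun j => by
    rw [Polynomial.coeff_map]
    exact hcoeff j
  have hPg0 : P.eval g0 = 0 := by
    rw [hPdef, Polynomial.eval_prod]
    refine Finset.prod_eq_zero (Finset.mem_range.mpr (Nat.pos_of_ne_zero hk0)) ?_
    simp
  have hPc : P.eval c = 0 := by
    have h1 : (P.map τR).eval (τR g0) = τR (P.eval g0) := by
      rw [Polynomial.eval_map, Polynomial.eval₂_at_apply]
    rw [hmapP, hPg0, map_zero] at h1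
    have h2 : τR g0 = c := hτg0
    rwa [h2] at h1
  have hprodc : ∏ i ∈ Finset.range k, (c - g0 ^ p ^ i) = 0 := by
    have := hPc
    rw [hPdef, Polynomial.eval_prod] at this
    simpa using this
  obtain ⟨i, hik, hie⟩ := Finset.prod_eq_zero_iff.mp hprodc
  have hci : c = g0 ^ p ^ i := sub_eq_zero.mp hie
  refine ⟨i, Finset.mem_range.mp hik, ?_⟩
  -- the companion is the i-th Frobenius power
  have hτl : ∀ l : K, τ l = l ^ p ^ i := by
    intro l
    rcases eq_or_ne l 0 with rfl | hl
    · rw [hτ0, zero_pow (pow_ne_zero i hp0)]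
    · obtain ⟨m, rfl⟩ := hgen l hl
      calc τ (g0 ^ m) = (τ g0) ^ m := map_pow τR g0 m
        _ = (g0 ^ p ^ i) ^ m := by rw [hτg0, hci]
        _ = (g0 ^ m) ^ p ^ i := by rw [← pow_mul, ← pow_mul, Nat.mul_comm]
  intro l x
  constructor
  · rw [hτ l x, hτl l]
    push_cast
    ring
  · obtain ⟨z, hz⟩ := surjM1r x
    simp only at hz
    calc g3 ((l : V) * x) = g3 ((l : V) * M1.mul z 1) := by rw [hz]
      _ = g3 (M1.mul ((l : V) * z) 1) := by rw [(hbil1 l z 1).1]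
      _ = M2.mul (g1 ((l : V) * z)) (g2 1) := (hiso _ _).symm
      _ = M2.mul (((τ l : K) : V) * g1 z) (g2 1) := by rw [hτ l z]
      _ = ((τ l : K) : V) * M2.mul (g1 z) (g2 1) := (hbil2 (τ l) _ _).1
      _ = ((τ l : K) : V) * g3 (M1.mul z 1) := by rw [hiso]
      _ = (l : V) ^ p ^ i * g3 x := by rw [hz, hτl l]; push_cast; ring
end

section
/- Let q be an odd prime power (q = p^g, p odd prime) with q ≡ 1 (mod 4), let m be odd and n even with 0 < n < 4m and gcd(m,n) = 1, let u be a primitive element (a generator of the multiplicative group) of F_{q^{4m}} and set v = u^{q^m − 1}. Define on F_{q^{4m}} the multiplication x⋆y = y^{q^n}·x + y·x^{q^n} − v·(y^{q^{m+n}}·x^{q^{3m}} + y^{q^{3m}}·x^{q^{m+n}}). Then the middle-nucleus set {ψ ∈ End_{F_p}(F_{q^{4m}}) : for every y there exists z with ψ(x)⋆y = x⋆z for all x} equals the set of scalar maps {x ↦ λ·x : λ ∈ F_{q²}}, hence has exactly q² elements, and the right-nucleus set {μ ∈ End_{F_p}(F_{q^{4m}}) : for every y there exists z with μ(x⋆y)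 = x⋆z for all x} equals {x ↦ λ·x : λ ∈ F_q}, hence has exactly q elements. -/
set_option maxHeartbeats 2000000

open Finset Polynomial

namespace S17

variable {p : ℕ} [Fact p.Prime] {N : ℕ} [NeZero N]

noncomputable instance : Fintype (GaloisField p N) := Fintype.ofFinite _

lemma cardF : Fintype.card (GaloisField p N) = p ^ N := by
  rw [← Nat.card_eq_fintype_card, GaloisField.card p N (NeZero.ne N)]

lemma gpow_card (x : GaloisField p N) : x ^ p ^ N = x := by
  rw [← cardF (p := p) (N := N)]; exact FiniteField.pow_card x

lemma pow_pow_mod (x : GaloisField p N) (a : ℕ) : x ^ p ^ a = x ^ p ^ (a % N) := by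
  have key : ∀ (t : ℕ) (y : GaloisField p N), y ^ p ^ (N * t) = y := by
    intro t
    induction t with
    | zero => simp
    | succ t ih =>
      intro y
      rw [Nat.mul_succ, pow_add, pow_mul, gpow_card, ih]
  conv_lhs => rw [← Nat.div_add_mod a N, pow_add, pow_mul, key]

lemma pow_val_cast (x : GaloisField p N) (a : ℕ) :
    x ^ p ^ ((a : ZMod N)).val = x ^ p ^ a := by
  rw [ZMod.val_natCast, ← pow_pow_mod]


/-- linearized-polynomial evaluation -/
noncomputable def Pc (c : ZMod N → GaloisField p N) (x : GaloisField p N) :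
    GaloisField p N :=
  ∑ i : ZMod N, c i * x ^ p ^ i.val

lemma Pc_vanish {c : ZMod N → GaloisField p N} (h : ∀ x, Pc c x = 0) :
    ∀ i, c i = 0 := by
  classical
  intro i
  have hp1 : 1 < p := (Fact.out : p.Prime).one_lt
  set P : Polynomial (GaloisField p N) :=
    ∑ j : ZMod N, Polynomial.C (c j) * Polynomial.X ^ (p ^ j.val) with hP
  have hdeg : P.natDegree < Fintype.card (GaloisField p N) := by
    rw [cardF]
    have h1 : P.natDegree ≤ p ^ (N - 1) := by
      refine Polynomial.natDegree_sum_le_of_forall_le _ _ ?_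
      intro j _
      refine (Polynomial.natDegree_C_mul_le _ _).trans ?_
      rw [Polynomial.natDegree_X_pow]
      exact Nat.pow_le_pow_right (le_of_lt hp1) (by
        have := ZMod.val_lt j; omega)
    exact lt_of_le_of_lt h1 (Nat.pow_lt_pow_right hp1 (by
      have := NeZero.pos N; omega))
  have hzero : P = 0 := by
    refine Polynomial.eq_zero_of_natDegree_lt_card_of_eval_eq_zero P
      Function.injective_id (fun x => ?_) (by simpa using hdeg)
    have := h x
    rw [Pc] at this
    simpa [P, Polynomial.eval_finset_sum] using this
  have hco := congrArg (fun Q : Polynomial (GaloisField p N) => Q.coeff (p ^ i.val)) hzero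
  simp only [hP, Polynomial.finset_sum_coeff, Polynomial.coeff_C_mul,
    Polynomial.coeff_X_pow, Polynomial.coeff_zero, mul_ite, mul_one, mul_zero] at hco
  have hrw : ∀ x : ZMod N,
      (if p ^ i.val = p ^ x.val then c x else 0) = if x = i then c x else 0 := by
    intro x
    by_cases hx : x = i
    · subst hx; simp
    · rw [if_neg hx, if_neg]
      intro hpe
      exact hx (ZMod.val_injective _ (Nat.pow_right_injective hp1 hpe).symm)
  rw [Finset.sum_congr rfl (fun x _ => hrw x), Finset.sum_ite_eq' Finset.univ i c] at hco
  simpa using hco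
  

lemma Pc_single (i₀ : ZMod N) (w x : GaloisField p N) :
    Pc (fun i => if i = i₀ then w else 0) x = w * x ^ p ^ i₀.val := by
  rw [Pc, Finset.sum_eq_single i₀]
  · simp
  · intro b _ hb; rw [if_neg hb, zero_mul]
  · intro h; exact absurd (Finset.mem_univ i₀) h

lemma val_add_nat (i : ZMod N) (k : ℕ) : (i + (k : ZMod N)).val = (i.val + k) % N := by
  rw [ZMod.val_add, ZMod.val_natCast, Nat.add_mod i.val k N,
    Nat.mod_eq_of_lt (ZMod.val_lt i)]

lemma pow_add_val (x : GaloisField p N) (i : ZMod N) (k : ℕ) :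
    x ^ p ^ (i + (k : ZMod N)).val = x ^ p ^ (i.val + k) := by
  rw [val_add_nat, ← pow_pow_mod]

/-- shifting a sum over `ZMod N` -/
lemma sum_shift (f : ZMod N → GaloisField p N) (k : ZMod N) (x : GaloisField p N) :
    ∑ i : ZMod N, f i * x ^ p ^ (i + k).val
      = ∑ a : ZMod N, f (a - k) * x ^ p ^ a.val := by
  refine Fintype.sum_equiv (Equiv.addRight k) _ _ (fun i => ?_)
  simp [Equiv.coe_addRight, add_sub_cancel_right]

lemma Pc_shift (c : ZMod N → GaloisField p N) (k : ℕ) (x : GaloisField p N) :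
    (Pc c x) ^ p ^ k
      = ∑ a : ZMod N, (c (a - (k : ZMod N))) ^ p ^ k * x ^ p ^ a.val := by
  rw [Pc, ← iterateFrobenius_def (R := GaloisField p N) (p := p) k, map_sum]
  rw [← sum_shift (fun i => (c i) ^ p ^ k) ((k : ZMod N)) x]
  refine Finset.sum_congr rfl (fun i _ => ?_)
  rw [iterateFrobenius_def, mul_pow, ← pow_mul, ← pow_add, pow_add_val]

lemma Pc_repr (ψ : GaloisField p N →ₗ[ZMod p] GaloisField p N) :
    ∃ c, ∀ x, ψ x = Pc c x := by
  classical
  -- the additive map attached to a coefficient vector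
  have hmap : ∀ c : ZMod N → GaloisField p N,
      ∃ φ : GaloisField p N →ₗ[ZMod p] GaloisField p N, ∀ x, φ x = Pc c x := by
    intro c
    refine ⟨{ toFun := Pc c, map_add' := ?_, map_smul' := ?_ }, fun x => rfl⟩
    · intro x y
      rw [Pc, Pc, Pc, ← Finset.sum_add_distrib]
      refine Finset.sum_congr rfl (fun i _ => ?_)
      rw [add_pow_char_pow, mul_add]
    · intro r x
      simp only [RingHom.id_apply]
      rw [Pc, Pc, Finset.smul_sum]
      refine Finset.sum_congr rfl (fun i _ => ?_)
      rw [Algebra.smul_def, Algebra.smul_def, mul_pow, ← map_pow, ZMod.pow_card_pow,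
        mul_left_comm]
  choose toL htoL using hmap
  have hinj : Function.Injective toL := by
    intro c d hcd
    have hz : ∀ x, Pc (fun i => c i - d i) x = 0 := by
      intro x
      have : Pc c x = Pc d x := by rw [← htoL c x, ← htoL d x, hcd]
      rw [Pc]
      simp only [sub_mul]
      rw [Finset.sum_sub_distrib, ← Pc, ← Pc, this, sub_self]
    funext i
    have := Pc_vanish hz i
    exact sub_eq_zero.mp this
  -- cardinality comparison
  have hNfr : Module.finrank (ZMod p) (GaloisField p N) = N :=
    GaloisField.finrank p (NeZero.ne N)
  let b : Module.Basis (Fin N) (ZMod p) (GaloisField p N) :=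
    (Module.finBasis (ZMod p) (GaloisField p N)).reindex (finCongr hNfr)
  haveI : Finite (GaloisField p N →ₗ[ZMod p] GaloisField p N) :=
    Finite.of_injective (fun φ => (φ : GaloisField p N → GaloisField p N))
      DFunLike.coe_injective
  haveI : Fintype (GaloisField p N →ₗ[ZMod p] GaloisField p N) :=
    Fintype.ofFinite _
  have hinj2 : Function.Injective
      (fun (φ : GaloisField p N →ₗ[ZMod p] GaloisField p N) (i : Fin N) => φ (b i)) := by
    intro φ₁ φ₂ h
    exact Module.Basis.ext b (fun i => congrFun h i)
  have hcard : Fintype.card (GaloisField p N →ₗ[ZMod p] GaloisField p N)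
      = Fintype.card (ZMod N → GaloisField p N) := by
    have h1 := Fintype.card_le_of_injective _ hinj
    have h2 := Fintype.card_le_of_injective _ hinj2
    have hc1 : Fintype.card (Fin N → GaloisField p N)
        = Fintype.card (ZMod N → GaloisField p N) := by
      simp [Fintype.card_fun, ZMod.card]
    omega
  have hbij : Function.Bijective toL :=
    (Fintype.bijective_iff_injective_and_card toL).mpr ⟨hinj, hcard.symm⟩
  obtain ⟨c, hc⟩ := hbij.surjective ψ
  exact ⟨c, fun x => by rw [← hc, htoL]⟩


/-- closure of the fixed-exponent set under gcd -/
lemma pow_gcd_fix {K : Type*} [Field K] (x : K) (Q : ℕ) :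
    ∀ a b : ℕ, x ^ Q ^ a = x → x ^ Q ^ b = x → x ^ Q ^ Nat.gcd a b = x := by
  have hmul : ∀ (a t : ℕ), x ^ Q ^ a = x → x ^ Q ^ (a * t) = x := by
    intro a t ha
    induction t with
    | zero => simp
    | succ t ih => rw [Nat.mul_succ, pow_add, pow_mul, ih, ha]
  have hmod : ∀ a b : ℕ, x ^ Q ^ a = x → x ^ Q ^ b = x → x ^ Q ^ (b % a) = x := by
    intro a b ha hb
    have h1 : x ^ Q ^ (a * (b / a) + b % a) = x := by
      rw [Nat.div_add_mod b a]; exact hb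
    rwa [pow_add, pow_mul, hmul a (b/a) ha] at h1
  intro a b
  induction a, b using Nat.gcd.induction with
  | H0 b => intro _ hb; simpa using hb
  | H1 a b hpos ih =>
    intro ha hb
    rw [Nat.gcd_rec]
    exact ih (hmod a b ha hb) ha

/-- cardinality of `{l | l ^ Q = l}` in `GaloisField p N` -/
lemma count_fixed (u : GaloisField p N) (hu0 : u ≠ 0)
    (hup : ∀ x : GaloisField p N, x ≠ 0 → ∃ i : ℕ, x = u ^ i)
    (Q : ℕ) (hQ : 2 ≤ Q) (hdvd : Q - 1 ∣ p ^ N - 1) :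
    Nat.card {l : GaloisField p N | l ^ Q = l} = Q := by
  classical
  have hp1 : 1 < p := (Fact.out : p.Prime).one_lt
  have hcge : 1 < Fintype.card (GaloisField p N) := Fintype.one_lt_card
  set M := Fintype.card (GaloisField p N) - 1 with hM
  have hMpn : M = p ^ N - 1 := by rw [hM, cardF]
  have hMpos : 0 < M := by omega
  have huM : u ^ M = 1 := FiniteField.pow_card_sub_one_eq_one u hu0
  have hufin : IsOfFinOrder u := isOfFinOrder_iff_pow_eq_one.mpr ⟨M, hMpos, huM⟩
  have hopos : 0 < orderOf u := hufin.orderOf_pos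
  have horder : orderOf u = M := by
    refine le_antisymm (Nat.le_of_dvd hMpos (orderOf_dvd_of_pow_eq_one huM)) ?_
    have hsub : (Finset.univ.erase (0 : GaloisField p N)) ⊆
        (Finset.range (orderOf u)).image (u ^ ·) := by
      intro x hx
      obtain ⟨i, rfl⟩ := hup x (Finset.ne_of_mem_erase hx)
      refine Finset.mem_image.mpr ⟨i % orderOf u, Finset.mem_range.mpr
        (Nat.mod_lt _ hopos), ?_⟩
      show u ^ (i % orderOf u) = u ^ i
      exact pow_mod_orderOf u i
    have := (Finset.card_le_card hsub).trans
      ((Finset.card_image_le).trans (by rw [Finset.card_range]))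
    rwa [Finset.card_erase_of_mem (Finset.mem_univ _), Finset.card_univ] at this
  obtain ⟨s, hs⟩ := hdvd
  rw [← hMpn] at hs
  have hspos : 0 < s := by
    rcases Nat.eq_zero_or_pos s with h | h
    · rw [h, Nat.mul_zero] at hs; omega
    · exact h
  -- lower bound
  have hlow : Q ≤ Nat.card {l : GaloisField p N | l ^ Q = l} := by
    have hmem : ∀ t : ℕ, t < Q - 1 → (u ^ (s * t)) ^ Q = u ^ (s * t) := by
      intro t ht
      have h1 : s * t * Q = s * t + t * M := by
        obtain ⟨R, rfl⟩ : ∃ R, Q = R + 1 := ⟨Q - 1, by omega⟩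
        have hs' : M = R * s := by simpa using hs
        rw [hs']; ring
      rw [← pow_mul, h1, pow_add, mul_comm t M, pow_mul u M t, huM, one_pow, mul_one]
    set f : Fin Q → {l : GaloisField p N | l ^ Q = l} := fun t =>
      if h : (t : ℕ) < Q - 1 then ⟨u ^ (s * (t : ℕ)), hmem _ h⟩
      else ⟨0, by simp [zero_pow (show Q ≠ 0 by omega)]⟩ with hf
    have hfinj : Function.Injective f := by
      intro t₁ t₂ h12
      rw [hf] at h12
      by_cases h1 : (t₁ : ℕ) < Q - 1 <;> by_cases h2 : (t₂ : ℕ) < Q - 1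
      · simp only [dif_pos h1, dif_pos h2] at h12
        have := Subtype.mk_eq_mk.mp h12
        have hst : s * (t₁ : ℕ) = s * (t₂ : ℕ) := by
          refine pow_injOn_Iio_orderOf ?_ ?_ this
          · simp only [Set.mem_Iio, horder, hs, Nat.mul_comm (Q-1) s]
            exact Nat.mul_lt_mul_of_le_of_lt (le_refl s) h1 hspos
          · simp only [Set.mem_Iio, horder, hs, Nat.mul_comm (Q-1) s]
            exact Nat.mul_lt_mul_of_le_of_lt (le_refl s) h2 hspos
        exact Fin.ext (Nat.eq_of_mul_eq_mul_left hspos hst)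
      · simp only [dif_pos h1, dif_neg h2] at h12
        exact absurd (Subtype.mk_eq_mk.mp h12) (pow_ne_zero _ hu0)
      · simp only [dif_neg h1, dif_pos h2] at h12
        exact absurd (Subtype.mk_eq_mk.mp h12).symm (pow_ne_zero _ hu0)
      · exact Fin.ext (by omega)
    calc Q = Nat.card (Fin Q) := by simp
      _ ≤ _ := Nat.card_le_card_of_injective f hfinj
  -- upper bound
  have hup2 : Nat.card {l : GaloisField p N | l ^ Q = l} ≤ Q := by
    set P : Polynomial (GaloisField p N) := Polynomial.X ^ Q - Polynomial.X with hP
    have hP0 : P ≠ 0 := by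
      intro h0
      have := congrArg (fun R : Polynomial (GaloisField p N) => R.coeff Q) h0
      simp [hP, Polynomial.coeff_X_pow, Polynomial.coeff_X,
        (show ¬ Q = 1 by omega), (show ¬ 1 = Q by omega)] at this
    have hdegP : P.natDegree ≤ Q := by
      refine (Polynomial.natDegree_sub_le _ _).trans ?_
      simp [Polynomial.natDegree_X_pow, Polynomial.natDegree_X]
      omega
    have hmemroot : ∀ l : {l : GaloisField p N | l ^ Q = l},
        (l : GaloisField p N) ∈ P.roots.toFinset := by
      intro l
      rw [Multiset.mem_toFinset, Polynomial.mem_roots hP0]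
      simp only [hP, Polynomial.IsRoot.def, Polynomial.eval_sub, Polynomial.eval_pow,
        Polynomial.eval_X]
      rw [l.2, sub_self]
    have hinj : Function.Injective
        (fun l : {l : GaloisField p N | l ^ Q = l} =>
          (⟨(l : GaloisField p N), hmemroot l⟩ : P.roots.toFinset)) := by
      intro a b hab
      exact Subtype.ext (Subtype.mk_eq_mk.mp hab)
    calc Nat.card {l : GaloisField p N | l ^ Q = l}
        ≤ Nat.card P.roots.toFinset := Nat.card_le_card_of_injective _ hinj
      _ = P.roots.toFinset.card := Nat.card_eq_finsetCard _
      _ ≤ Multiset.card P.roots := Multiset.toFinset_card_le _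
      _ ≤ P.natDegree := Polynomial.card_roots' P
      _ ≤ Q := hdegP
  omega


/-- index map into `ZMod (g*(4*m))` -/
def Jmap (g m t : ℕ) : ZMod (g*(4*m)) := ((g*t : ℕ) : ZMod (g*(4*m)))

lemma Jmap_zero (g m : ℕ) : Jmap g m 0 = 0 := by simp [Jmap]

lemma Jmap_add (g m : ℕ) (s t : ℕ) : Jmap g m s + Jmap g m t = Jmap g m (s+t) := by
  simp only [Jmap]; push_cast; ring

lemma Jeq {g m : ℕ} (hg : 0 < g) (s t : ℕ) :
    Jmap g m s = Jmap g m t ↔ s % (4*m) = t % (4*m) := by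
  rw [Jmap, Jmap, ZMod.natCast_eq_natCast_iff]
  unfold Nat.ModEq
  rw [Nat.mul_mod_mul_left, Nat.mul_mod_mul_left]
  exact ⟨fun h => Nat.eq_of_mul_eq_mul_left hg h, fun h => by rw [h]⟩


lemma sum_single (i₀ : ZMod N) (w x : GaloisField p N) :
    ∑ b : ZMod N, (if b = i₀ then w else 0) * x ^ p ^ b.val = w * x ^ p ^ i₀.val :=
  Pc_single i₀ w x

lemma sum_sub_mul (e f : ZMod N → GaloisField p N) (x : GaloisField p N) :
    ∑ b : ZMod N, (e b - f b) * x ^ p ^ b.val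
      = (∑ b : ZMod N, e b * x ^ p ^ b.val) - ∑ b : ZMod N, f b * x ^ p ^ b.val := by
  rw [← Finset.sum_sub_distrib]; exact Finset.sum_congr rfl fun b _ => sub_mul _ _ _

lemma sum_add_mul (e f : ZMod N → GaloisField p N) (x : GaloisField p N) :
    ∑ b : ZMod N, (e b + f b) * x ^ p ^ b.val
      = (∑ b : ZMod N, e b * x ^ p ^ b.val) + ∑ b : ZMod N, f b * x ^ p ^ b.val := by
  rw [← Finset.sum_add_distrib]; exact Finset.sum_congr rfl fun b _ => add_mul _ _ _

lemma sum_vanish {e : ZMod N → GaloisField p N}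
    (h : ∀ x, ∑ i : ZMod N, e i * x ^ p ^ i.val = 0) : ∀ i, e i = 0 :=
  Pc_vanish h

lemma Pc_shiftJ (g m : ℕ) [NeZero (g*(4*m))]
    (c : ZMod (g*(4*m)) → GaloisField p (g*(4*m))) (k : ℕ) (x : GaloisField p (g*(4*m))) :
    (Pc c x) ^ p ^ (g*k)
      = ∑ a : ZMod (g*(4*m)), (c (a - Jmap g m k)) ^ p ^ (g*k) * x ^ p ^ a.val :=
  Pc_shift c (g*k) x

end S17

/-- The multiplication of a Bierbrauer presemifield on `F_{q^{4m}}`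
(realized as `GaloisField p (g * (4m))`, `q = p^g`):
`x⋆y = y^{q^n}·x + y·x^{q^n} − v·(y^{q^{m+n}}·x^{q^{3m}} + y^{q^{3m}}·x^{q^{m+n}})`. -/
noncomputable def bierMul (p g m n q : ℕ) [Fact p.Prime]
    (v : GaloisField p (g * (4 * m))) (x y : GaloisField p (g * (4 * m))) :
    GaloisField p (g * (4 * m)) :=
  y ^ q ^ n * x + y * x ^ q ^ n -
    v * (y ^ q ^ (m + n) * x ^ q ^ (3 * m) + y ^ q ^ (3 * m) * x ^ q ^ (m + n))

namespace S17

lemma mid_hard (p g m n : ℕ) [Fact p.Prime] (hg : 0 < g) (hp2 : p ≠ 2)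
    (hm : Odd m) (hn : Even n) (hn0 : 0 < n) (hn4 : n < 4 * m)
    (hgcd : Nat.gcd m n = 1)
    (v : GaloisField p (g * (4 * m))) (hv0 : v ≠ 0)
    (ψ : GaloisField p (g * (4 * m)) →ₗ[ZMod p] GaloisField p (g * (4 * m)))
    (H : ∀ y, ∃ z, ∀ x, bierMul p g m n (p^g) v (ψ x) y = bierMul p g m n (p^g) v x z) :
    ∃ l, l ^ (p^g) ^ 2 = l ∧ ∀ x, ψ x = l * x := by
  classical
  have hmpos : 0 < m := hm.pos
  haveI : NeZero (g * (4*m)) := ⟨Nat.pos_iff_ne_zero.mp (by positivity)⟩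
  have hm2 : m % 2 = 1 := Nat.odd_iff.mp hm
  have hn2 : n % 2 = 0 := Nat.even_iff.mp hn
  have hJ : ∀ s t : ℕ, Jmap g m s = Jmap g m t ↔ s % (4*m) = t % (4*m) := Jeq hg
  have hred : ∀ s, s < 12*m →
      s % (4*m) = if s < 4*m then s else (if s < 8*m then s - 4*m else s - 8*m) := by
    intro s hs
    split_ifs with h1 h2
    · exact Nat.mod_eq_of_lt h1
    · rw [Nat.mod_eq_sub_mod (by omega)]; exact Nat.mod_eq_of_lt (by omega)
    · have e1 : s % (4*m) = (s - 4*m) % (4*m) := Nat.mod_eq_sub_mod (by omega)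
      have e2 : (s - 4*m) % (4*m) = (s - 4*m - 4*m) % (4*m) := Nat.mod_eq_sub_mod (by omega)
      rw [e1, e2, Nat.mod_eq_of_lt (show s - 4*m - 4*m < 4*m by omega)]
      omega
  have f1 : Jmap g m n ≠ 0 := by
    rw [← Jmap_zero g m, Ne, hJ, hred n (by omega), hred 0 (by omega)]
    split_ifs <;> omega
  have f2 : Jmap g m (3*m) ≠ 0 := by
    rw [← Jmap_zero g m, Ne, hJ, hred (3*m) (by omega), hred 0 (by omega)]
    split_ifs <;> omega
  have f3 : Jmap g m (m+n) ≠ 0 := by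
    rw [← Jmap_zero g m, Ne, hJ, hred (m+n) (by omega), hred 0 (by omega)]
    split_ifs <;> omega
  have f4 : Jmap g m n ≠ Jmap g m (3*m) := by
    rw [Ne, hJ, hred n (by omega), hred (3*m) (by omega)]; split_ifs <;> omega
  have f5 : Jmap g m n ≠ Jmap g m (m+n) := by
    rw [Ne, hJ, hred n (by omega), hred (m+n) (by omega)]; split_ifs <;> omega
  have f7a : Jmap g m (n+3*m) ≠ 0 := by
    rw [← Jmap_zero g m, Ne, hJ, hred (n+3*m) (by omega), hred 0 (by omega)]
    split_ifs <;> omega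
  have f7b : Jmap g m (n+3*m) ≠ Jmap g m n := by
    rw [Ne, hJ, hred (n+3*m) (by omega), hred n (by omega)]; split_ifs <;> omega
  have f7c : Jmap g m (n+3*m) ≠ Jmap g m (3*m) := by
    rw [Ne, hJ, hred (n+3*m) (by omega), hred (3*m) (by omega)]; split_ifs <;> omega
  have f7d : Jmap g m (n+3*m) ≠ Jmap g m (m+n) := by
    rw [Ne, hJ, hred (n+3*m) (by omega), hred (m+n) (by omega)]; split_ifs <;> omega
  have f8a : Jmap g m (m+2*n) ≠ 0 := by
    rw [← Jmap_zero g m, Ne, hJ, hred (m+2*n) (by omega), hred 0 (by omega)]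
    split_ifs <;> omega
  have f8b : Jmap g m (m+2*n) ≠ Jmap g m n := by
    rw [Ne, hJ, hred (m+2*n) (by omega), hred n (by omega)]; split_ifs <;> omega
  have f8c : Jmap g m (m+2*n) ≠ Jmap g m (3*m) := by
    rw [Ne, hJ, hred (m+2*n) (by omega), hred (3*m) (by omega)]
    split_ifs <;> omega
  have f8d : Jmap g m (m+2*n) ≠ Jmap g m (m+n) := by
    rw [Ne, hJ, hred (m+2*n) (by omega), hred (m+n) (by omega)]; split_ifs <;> omega
  have h2F : (2 : GaloisField p (g*(4*m))) ≠ 0 := by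
    intro h2
    have := (CharP.cast_eq_zero_iff (GaloisField p (g*(4*m))) p 2).mp h2
    exact hp2 ((Nat.prime_dvd_prime_iff_eq Fact.out Nat.prime_two).mp this)
  have hpk0 : ∀ k : ℕ, p ^ k ≠ 0 := fun k =>
    pow_ne_zero k (Nat.Prime.ne_zero Fact.out)
  -- congruent exponents give equal powers
  have hpow_red : ∀ (x : GaloisField p (g*(4*m))) (s t : ℕ), Jmap g m s = Jmap g m t →
      x ^ p ^ (g*s) = x ^ p ^ (g*t) := by
    intro x s t hst
    simp only [Jmap] at hst
    have h2 : (g*s) % (g*(4*m)) = (g*t) % (g*(4*m)) :=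
      (ZMod.natCast_eq_natCast_iff _ _ _).mp hst
    rw [pow_pow_mod x (g*s), h2, ← pow_pow_mod]
  obtain ⟨c, hc⟩ := Pc_repr ψ
  choose τ hτ using H
  have hxval : ∀ (x : GaloisField p (g*(4*m))) (k : ℕ),
      x ^ p ^ ((Jmap g m k).val) = x ^ p ^ (g*k) := fun x k => pow_val_cast x (g*k)
  have hx0val : ∀ x : GaloisField p (g*(4*m)), x ^ p ^ ((0 : ZMod (g*(4*m))).val) = x := by
    intro x; rw [ZMod.val_zero, pow_zero, pow_one]
  -- the master coefficient identity
  have key : ∀ (y : GaloisField p (g*(4*m))) (a : ZMod (g*(4*m))),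
      y ^ p ^ (g*n) * c a + y * (c (a - Jmap g m n)) ^ p ^ (g*n)
        - v * (y ^ p ^ (g*(m+n)) * (c (a - Jmap g m (3*m))) ^ p ^ (g*(3*m))
             + y ^ p ^ (g*(3*m)) * (c (a - Jmap g m (m+n))) ^ p ^ (g*(m+n)))
      = (if a = 0 then (τ y) ^ p ^ (g*n) else 0) + (if a = Jmap g m n then τ y else 0)
        - v * ((if a = Jmap g m (3*m) then (τ y) ^ p ^ (g*(m+n)) else 0)
             + (if a = Jmap g m (m+n) then (τ y) ^ p ^ (g*(3*m)) else 0)) := by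
    intro y a
    have hvan : ∀ x : GaloisField p (g*(4*m)),
        ∑ b : ZMod (g*(4*m)),
          ((y ^ p ^ (g*n) * c b + y * (c (b - Jmap g m n)) ^ p ^ (g*n)
            - v * (y ^ p ^ (g*(m+n)) * (c (b - Jmap g m (3*m))) ^ p ^ (g*(3*m))
                 + y ^ p ^ (g*(3*m)) * (c (b - Jmap g m (m+n))) ^ p ^ (g*(m+n))))
          - ((if b = 0 then (τ y) ^ p ^ (g*n) else 0) + (if b = Jmap g m n then τ y else 0)
            - v * ((if b = Jmap g m (3*m) then (τ y) ^ p ^ (g*(m+n)) else 0)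
                 + (if b = Jmap g m (m+n) then (τ y) ^ p ^ (g*(3*m)) else 0))))
          * x ^ p ^ b.val = 0 := by
      intro x
      have hL : bierMul p g m n (p^g) v (ψ x) y
          = ∑ b : ZMod (g*(4*m)),
            (y ^ p ^ (g*n) * c b + y * (c (b - Jmap g m n)) ^ p ^ (g*n)
              - v * (y ^ p ^ (g*(m+n)) * (c (b - Jmap g m (3*m))) ^ p ^ (g*(3*m))
                   + y ^ p ^ (g*(3*m)) * (c (b - Jmap g m (m+n))) ^ p ^ (g*(m+n))))
            * x ^ p ^ b.val := by
        rw [hc x, bierMul]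
        simp only [← pow_mul]
        rw [Pc_shiftJ g m c n x, Pc_shiftJ g m c (3*m) x, Pc_shiftJ g m c (m+n) x]
        rw [Pc]
        simp only [Finset.mul_sum]
        rw [← Finset.sum_add_distrib, ← Finset.sum_add_distrib, Finset.mul_sum,
          ← Finset.sum_sub_distrib]
        exact Finset.sum_congr rfl (fun b _ => by ring)
      have hR : bierMul p g m n (p^g) v x (τ y)
          = ∑ b : ZMod (g*(4*m)),
            ((if b = 0 then (τ y) ^ p ^ (g*n) else 0) + (if b = Jmap g m n then τ y else 0)
              - v * ((if b = Jmap g m (3*m) then (τ y) ^ p ^ (g*(m+n)) else 0)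
                   + (if b = Jmap g m (m+n) then (τ y) ^ p ^ (g*(3*m)) else 0)))
            * x ^ p ^ b.val := by
        rw [bierMul]
        simp only [← pow_mul]
        rw [show (τ y) ^ p ^ (g*n) * x
              = (τ y) ^ p ^ (g*n) * x ^ p ^ ((0 : ZMod (g*(4*m))).val) by rw [hx0val],
          show (τ y) * x ^ p ^ (g*n) = (τ y) * x ^ p ^ ((Jmap g m n).val) by rw [hxval],
          show (τ y) ^ p ^ (g*(m+n)) * x ^ p ^ (g*(3*m))
              = (τ y) ^ p ^ (g*(m+n)) * x ^ p ^ ((Jmap g m (3*m)).val) by rw [hxval],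
          show (τ y) ^ p ^ (g*(3*m)) * x ^ p ^ (g*(m+n))
              = (τ y) ^ p ^ (g*(3*m)) * x ^ p ^ ((Jmap g m (m+n)).val) by rw [hxval]]
        rw [← sum_single (0 : ZMod (g*(4*m))) ((τ y) ^ p ^ (g*n)) x,
          ← sum_single (Jmap g m n) (τ y) x,
          ← sum_single (Jmap g m (3*m)) ((τ y) ^ p ^ (g*(m+n))) x,
          ← sum_single (Jmap g m (m+n)) ((τ y) ^ p ^ (g*(3*m))) x]
        rw [← Finset.sum_add_distrib, ← Finset.sum_add_distrib, Finset.mul_sum,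
          ← Finset.sum_sub_distrib]
        exact Finset.sum_congr rfl (fun b _ => by ring)
      rw [sum_sub_mul
        (fun b => (y ^ p ^ (g*n) * c b + y * (c (b - Jmap g m n)) ^ p ^ (g*n)
            - v * (y ^ p ^ (g*(m+n)) * (c (b - Jmap g m (3*m))) ^ p ^ (g*(3*m))
                 + y ^ p ^ (g*(3*m)) * (c (b - Jmap g m (m+n))) ^ p ^ (g*(m+n)))))
        (fun b => ((if b = 0 then (τ y) ^ p ^ (g*n) else 0) + (if b = Jmap g m n then τ y else 0)
            - v * ((if b = Jmap g m (3*m) then (τ y) ^ p ^ (g*(m+n)) else 0)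
                 + (if b = Jmap g m (m+n) then (τ y) ^ p ^ (g*(3*m)) else 0)))) x,
        ← hL, ← hR, hτ y x, sub_self]
    exact sub_eq_zero.mp (sum_vanish hvan a)
  -- Step 1: coefficients away from the support vanish
  have hstep1 : ∀ a : ZMod (g*(4*m)), a ≠ 0 → a ≠ Jmap g m n → a ≠ Jmap g m (3*m) →
      a ≠ Jmap g m (m+n) →
      c a = 0 ∧ c (a - Jmap g m n) = 0 ∧ c (a - Jmap g m (3*m)) = 0
        ∧ c (a - Jmap g m (m+n)) = 0 := by
    intro a ha0 ha1 ha2 ha3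
    have hkey0 : ∀ y : GaloisField p (g*(4*m)),
        y ^ p ^ (g*n) * c a + y * (c (a - Jmap g m n)) ^ p ^ (g*n)
          - v * (y ^ p ^ (g*(m+n)) * (c (a - Jmap g m (3*m))) ^ p ^ (g*(3*m))
               + y ^ p ^ (g*(3*m)) * (c (a - Jmap g m (m+n))) ^ p ^ (g*(m+n))) = 0 := by
      intro y
      have hk := key y a
      rw [if_neg ha0, if_neg ha1, if_neg ha2, if_neg ha3] at hk
      simpa using hk
    have h0 : ∀ b : ZMod (g*(4*m)),
        ((if b = Jmap g m n then c a else 0)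
          + (if b = 0 then (c (a - Jmap g m n)) ^ p ^ (g*n) else 0))
          - ((if b = Jmap g m (m+n) then v * (c (a - Jmap g m (3*m))) ^ p ^ (g*(3*m)) else 0)
           + (if b = Jmap g m (3*m) then v * (c (a - Jmap g m (m+n))) ^ p ^ (g*(m+n)) else 0))
        = 0 := by
      apply sum_vanish
      intro y
      rw [sum_sub_mul
        (fun b => (if b = Jmap g m n then c a else 0)
          + (if b = 0 then (c (a - Jmap g m n)) ^ p ^ (g*n) else 0))
        (fun b => (if b = Jmap g m (m+n) then v * (c (a - Jmap g m (3*m))) ^ p ^ (g*(3*m)) else 0)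
          + (if b = Jmap g m (3*m) then v * (c (a - Jmap g m (m+n))) ^ p ^ (g*(m+n)) else 0)) y,
        sum_add_mul (fun b => (if b = Jmap g m n then c a else 0))
          (fun b => (if b = 0 then (c (a - Jmap g m n)) ^ p ^ (g*n) else 0)) y,
        sum_add_mul
          (fun b => (if b = Jmap g m (m+n) then v * (c (a - Jmap g m (3*m))) ^ p ^ (g*(3*m)) else 0))
          (fun b => (if b = Jmap g m (3*m) then v * (c (a - Jmap g m (m+n))) ^ p ^ (g*(m+n)) else 0)) y,
        sum_single, sum_single, sum_single, sum_single,
        hxval y n, hx0val y, hxval y (m+n), hxval y (3*m)]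
      linear_combination hkey0 y
    have hc1 : c a = 0 := by
      have h := h0 (Jmap g m n)
      rw [if_pos rfl, if_neg f1, if_neg f5, if_neg f4] at h
      simpa using h
    have hc2 : c (a - Jmap g m n) = 0 := by
      have h := h0 0
      rw [if_neg (Ne.symm f1), if_pos rfl, if_neg (Ne.symm f3), if_neg (Ne.symm f2)] at h
      have h2 : (c (a - Jmap g m n)) ^ p ^ (g*n) = 0 := by simpa using h
      exact pow_eq_zero_iff (hpk0 (g*n)) |>.mp h2
    have hc3 : c (a - Jmap g m (3*m)) = 0 := by
      by_cases hcol : Jmap g m (m+n) = Jmap g m (3*m)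
      · have h := h0 (Jmap g m (m+n))
        rw [if_neg (Ne.symm f5), if_neg f3, if_pos rfl, if_pos hcol] at h
        rw [hcol, hpow_red (c (a - Jmap g m (3*m))) (m+n) (3*m) hcol] at h
        have h2 : (2:GaloisField p (g*(4*m)))
            * (v * (c (a - Jmap g m (3*m))) ^ p ^ (g*(3*m))) = 0 := by
          linear_combination -h
        rcases mul_eq_zero.mp h2 with h' | h'
        · exact absurd h' h2F
        · rcases mul_eq_zero.mp h' with h'' | h''
          · exact absurd h'' hv0
          · exact pow_eq_zero_iff (hpk0 _) |>.mp h''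
      · have h := h0 (Jmap g m (m+n))
        rw [if_neg (Ne.symm f5), if_neg f3, if_pos rfl, if_neg hcol] at h
        have h2 : v * (c (a - Jmap g m (3*m))) ^ p ^ (g*(3*m)) = 0 := by
          linear_combination -h
        rcases mul_eq_zero.mp h2 with h' | h'
        · exact absurd h' hv0
        · exact pow_eq_zero_iff (hpk0 _) |>.mp h'
    have hc4 : c (a - Jmap g m (m+n)) = 0 := by
      by_cases hcol : Jmap g m (m+n) = Jmap g m (3*m)
      · rw [hcol]; exact hc3
      · have h := h0 (Jmap g m (3*m))
        rw [if_neg (Ne.symm f4), if_neg f2, if_neg (fun h' => hcol h'.symm), if_pos rfl] at h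
        have h2 : v * (c (a - Jmap g m (m+n))) ^ p ^ (g*(m+n)) = 0 := by
          linear_combination -h
        rcases mul_eq_zero.mp h2 with h' | h'
        · exact absurd h' hv0
        · exact pow_eq_zero_iff (hpk0 _) |>.mp h'
    exact ⟨hc1, hc2, hc3, hc4⟩
  -- Step 2: all coefficients except at 0 vanish
  have kill : ∀ a : ZMod (g*(4*m)), a ≠ 0 → c a = 0 := by
    intro a ha0
    by_cases h1 : a = Jmap g m n
    · subst h1
      have h := (hstep1 (Jmap g m (n+3*m)) f7a f7b f7c f7d).2.2.1
      rwa [show Jmap g m (n+3*m) - Jmap g m (3*m) = Jmap g m n from by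
        rw [← Jmap_add g m n (3*m)]; exact add_sub_cancel_right _ _] at h
    · by_cases h2 : a = Jmap g m (3*m)
      · subst h2
        have h := (hstep1 (Jmap g m (n+3*m)) f7a f7b f7c f7d).2.1
        rwa [show Jmap g m (n+3*m) - Jmap g m n = Jmap g m (3*m) from by
          rw [← Jmap_add g m n (3*m)]; exact add_sub_cancel_left _ _] at h
      · by_cases h3 : a = Jmap g m (m+n)
        · subst h3
          have h := (hstep1 (Jmap g m (m+2*n)) f8a f8b f8c f8d).2.1
          rwa [show Jmap g m (m+2*n) - Jmap g m n = Jmap g m (m+n) from by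
            rw [show m+2*n = (m+n)+n from by ring, ← Jmap_add g m (m+n) n]
            exact add_sub_cancel_right _ _] at h
        · exact (hstep1 a ha0 h1 h2 h3).1
  -- Step 3: the scalar equations
  have hτ1 : ∀ y, y * (c 0) ^ p ^ (g*n) = τ y := by
    intro y
    have h := key y (Jmap g m n)
    rw [if_neg f1, if_pos rfl, if_neg f4, if_neg f5] at h
    rw [kill (Jmap g m n) f1, sub_self,
      kill (Jmap g m n - Jmap g m (3*m)) (sub_ne_zero_of_ne f4),
      kill (Jmap g m n - Jmap g m (m+n)) (sub_ne_zero_of_ne f5)] at h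
    have hz1 : (0:GaloisField p (g*(4*m))) ^ p ^ (g*(3*m)) = 0 := zero_pow (hpk0 _)
    have hz2 : (0:GaloisField p (g*(4*m))) ^ p ^ (g*(m+n)) = 0 := zero_pow (hpk0 _)
    rw [hz1, hz2] at h
    linear_combination h
  have h00 : c 0 = ((c 0) ^ p ^ (g*n)) ^ p ^ (g*n) := by
    have h := key 1 0
    rw [if_pos rfl, if_neg (Ne.symm f1), if_neg (Ne.symm f2), if_neg (Ne.symm f3)] at h
    rw [zero_sub, zero_sub, zero_sub,
      kill (-Jmap g m n) (neg_ne_zero.mpr f1),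
      kill (-Jmap g m (3*m)) (neg_ne_zero.mpr f2),
      kill (-Jmap g m (m+n)) (neg_ne_zero.mpr f3)] at h
    rw [← hτ1 1, one_mul] at h
    have hz1 : (0:GaloisField p (g*(4*m))) ^ p ^ (g*n) = 0 := zero_pow (hpk0 _)
    have hz2 : (0:GaloisField p (g*(4*m))) ^ p ^ (g*(3*m)) = 0 := zero_pow (hpk0 _)
    have hz3 : (0:GaloisField p (g*(4*m))) ^ p ^ (g*(m+n)) = 0 := zero_pow (hpk0 _)
    rw [hz1, hz2, hz3, one_pow, one_pow, one_pow] at h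
    linear_combination h
  have hT2n : (c 0) ^ (p^g) ^ (2*n) = c 0 := by
    rw [← pow_mul]
    rw [show g*(2*n) = g*n + g*n from by ring, pow_add, pow_mul]
    exact h00.symm
  have hfinal : (c 0) ^ (p^g) ^ 2 = c 0 := by
    by_cases hcol : Jmap g m (m+n) = Jmap g m (3*m)
    · -- collision case : n = 2m, m = 1, n = 2
      have hn2m : n = 2*m := by
        have h := (hJ (m+n) (3*m)).mp hcol
        rw [hred (m+n) (by omega), hred (3*m) (by omega)] at h
        split_ifs at h <;> omega
      have hm1 : m = 1 := by
        have hgm : Nat.gcd m n = m := by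
          rw [hn2m]; exact Nat.gcd_eq_left ⟨2, by ring⟩
        omega
      have h := key 1 (Jmap g m (3*m))
      rw [if_neg f2, if_neg (Ne.symm f4), if_pos rfl, if_pos hcol.symm] at h
      rw [kill (Jmap g m (3*m)) f2,
        kill (Jmap g m (3*m) - Jmap g m n) (sub_ne_zero_of_ne (Ne.symm f4)),
        hcol, sub_self] at h
      rw [hpow_red (c (0:ZMod (g*(4*m)))) (m+n) (3*m) hcol,
        hpow_red (τ 1) (m+n) (3*m) hcol] at h
      have hz1 : (0:GaloisField p (g*(4*m))) ^ p ^ (g*n) = 0 := zero_pow (hpk0 _)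
      rw [hz1, one_pow, one_pow, one_pow, ← hτ1 1, one_mul] at h
      have h2 : (2:GaloisField p (g*(4*m))) * (v * (c 0) ^ p ^ (g*(3*m)))
          = (2:GaloisField p (g*(4*m)))
            * (v * ((c 0 ^ p ^ (g*n)) ^ p ^ (g*(3*m)))) := by
        linear_combination -h
      have h3 := mul_left_cancel₀ h2F h2
      have h4 := mul_left_cancel₀ hv0 h3
      have h5 : c 0 = c 0 ^ p ^ (g*n) := by
        have hinj : Function.Injective
            (iterateFrobenius (GaloisField p (g*(4*m))) p (g*(3*m))) :=
          (iterateFrobenius (GaloisField p (g*(4*m))) p (g*(3*m))).injective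
        apply hinj
        simpa [iterateFrobenius_def] using h4
      have hne : n = 2 := by omega
      rw [← pow_mul, show g*2 = g*n from by rw [hne]]
      exact h5.symm
    · -- generic case
      have h := key 1 (Jmap g m (3*m))
      rw [if_neg f2, if_neg (Ne.symm f4), if_pos rfl,
        if_neg (fun h' => hcol h'.symm)] at h
      rw [kill (Jmap g m (3*m)) f2,
        kill (Jmap g m (3*m) - Jmap g m n) (sub_ne_zero_of_ne (Ne.symm f4)),
        kill (Jmap g m (3*m) - Jmap g m (m+n))
          (sub_ne_zero_of_ne (fun h' => hcol h'.symm)),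
        sub_self] at h
      have hz1 : (0:GaloisField p (g*(4*m))) ^ p ^ (g*n) = 0 := zero_pow (hpk0 _)
      have hz2 : (0:GaloisField p (g*(4*m))) ^ p ^ (g*(m+n)) = 0 := zero_pow (hpk0 _)
      rw [hz1, hz2, one_pow, one_pow, one_pow, ← hτ1 1, one_mul] at h
      have h2 : v * (c 0) ^ p ^ (g*(3*m))
          = v * ((c 0 ^ p ^ (g*n)) ^ p ^ (g*(m+n))) := by
        linear_combination -h
      have h3 := mul_left_cancel₀ hv0 h2
      -- raise both sides to p^(g*m)
      have h4 := congrArg (fun z : GaloisField p (g*(4*m)) => z ^ p ^ (g*m)) h3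
      rw [← pow_mul, ← pow_add, show g*(3*m) + g*m = g*(4*m) from by ring,
        gpow_card] at h4
      rw [← pow_mul, ← pow_mul, ← pow_add, ← pow_add] at h4
      rw [show g*n + (g*(m+n) + g*m) = g*(2*(m+n)) from by ring] at h4
      have hT2mn : (c 0) ^ (p^g) ^ (2*(m+n)) = c 0 := by
        rw [← pow_mul]; exact h4.symm
      have hfix := pow_gcd_fix (c 0) (p^g) (2*n) (2*(m+n)) hT2n hT2mn
      rwa [Nat.gcd_mul_left, Nat.gcd_add_self_right, Nat.gcd_comm, hgcd, mul_one] at hfix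
  refine ⟨c 0, hfinal, ?_⟩
  intro x
  rw [hc x, Pc, Finset.sum_eq_single 0]
  · rw [hx0val]
  · intro b _ hb; rw [kill b hb, zero_mul]
  · intro h; exact absurd (Finset.mem_univ 0) h


lemma pow_add_valJ {p : ℕ} [Fact p.Prime] (g m : ℕ) [NeZero (g*(4*m))]
    (x : GaloisField p (g*(4*m))) (i : ZMod (g*(4*m))) (k : ℕ) :
    x ^ p ^ ((i + Jmap g m k).val) = x ^ p ^ (i.val + g*k) :=
  pow_add_val x i (g*k)

lemma right_hard (p g m n : ℕ) [Fact p.Prime] (hg : 0 < g) (hp2 : p ≠ 2)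
    (hm : Odd m) (hn : Even n) (hn0 : 0 < n) (hn4 : n < 4 * m)
    (hgcd : Nat.gcd m n = 1)
    (v : GaloisField p (g * (4 * m))) (hv0 : v ≠ 0)
    (μ : GaloisField p (g * (4 * m)) →ₗ[ZMod p] GaloisField p (g * (4 * m)))
    (H : ∀ y, ∃ z, ∀ x, μ (bierMul p g m n (p^g) v x y) = bierMul p g m n (p^g) v x z) :
    ∃ l, l ^ (p^g) = l ∧ ∀ x, μ x = l * x := by
  classical
  have hmpos : 0 < m := hm.pos
  haveI : NeZero (g * (4*m)) := ⟨Nat.pos_iff_ne_zero.mp (by positivity)⟩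
  have hm2 : m % 2 = 1 := Nat.odd_iff.mp hm
  have hn2 : n % 2 = 0 := Nat.even_iff.mp hn
  have hJ : ∀ s t : ℕ, Jmap g m s = Jmap g m t ↔ s % (4*m) = t % (4*m) := Jeq hg
  have hred : ∀ s, s < 12*m →
      s % (4*m) = if s < 4*m then s else (if s < 8*m then s - 4*m else s - 8*m) := by
    intro s hs
    split_ifs with h1 h2
    · exact Nat.mod_eq_of_lt h1
    · rw [Nat.mod_eq_sub_mod (by omega)]; exact Nat.mod_eq_of_lt (by omega)
    · have e1 : s % (4*m) = (s - 4*m) % (4*m) := Nat.mod_eq_sub_mod (by omega)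
      have e2 : (s - 4*m) % (4*m) = (s - 4*m - 4*m) % (4*m) := Nat.mod_eq_sub_mod (by omega)
      rw [e1, e2, Nat.mod_eq_of_lt (show s - 4*m - 4*m < 4*m by omega)]
      omega
  have h2F : (2 : GaloisField p (g*(4*m))) ≠ 0 := by
    intro h2
    have := (CharP.cast_eq_zero_iff (GaloisField p (g*(4*m))) p 2).mp h2
    exact hp2 ((Nat.prime_dvd_prime_iff_eq Fact.out Nat.prime_two).mp this)
  have hpk0 : ∀ k : ℕ, p ^ k ≠ 0 := fun k =>
    pow_ne_zero k (Nat.Prime.ne_zero Fact.out)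
  obtain ⟨c, hc⟩ := Pc_repr μ
  choose τ hτ using H
  have hxval : ∀ (x : GaloisField p (g*(4*m))) (k : ℕ),
      x ^ p ^ ((Jmap g m k).val) = x ^ p ^ (g*k) := fun x k => pow_val_cast x (g*k)
  have hx0val : ∀ x : GaloisField p (g*(4*m)), x ^ p ^ ((0 : ZMod (g*(4*m))).val) = x := by
    intro x; rw [ZMod.val_zero, pow_zero, pow_one]
  -- expansion of a Frobenius power of the product
  have hterm : ∀ (x y : GaloisField p (g*(4*m))) (i : ZMod (g*(4*m))),
      c i * (bierMul p g m n (p^g) v x y) ^ p ^ i.val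
        = (c i * y ^ p ^ ((i + Jmap g m n).val)) * x ^ p ^ i.val
          + (c i * y ^ p ^ i.val) * x ^ p ^ ((i + Jmap g m n).val)
          - ((c i * v ^ p ^ i.val * y ^ p ^ ((i + Jmap g m (m+n)).val))
                * x ^ p ^ ((i + Jmap g m (3*m)).val)
            + (c i * v ^ p ^ i.val * y ^ p ^ ((i + Jmap g m (3*m)).val))
                * x ^ p ^ ((i + Jmap g m (m+n)).val)) := by
    intro x y i
    have hpw : ∀ (z : GaloisField p (g*(4*m))) (k : ℕ),
        (z ^ p ^ (g*k)) ^ p ^ i.val = z ^ p ^ ((i + Jmap g m k).val) := by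
      intro z k
      rw [pow_add_valJ g m z i k, ← pow_mul, ← pow_add, Nat.add_comm (g*k) i.val]
    rw [bierMul]
    simp only [← pow_mul]
    simp only [sub_pow_char_pow, add_pow_char_pow, mul_pow]
    rw [hpw y n, hpw x n, hpw y (m+n), hpw x (3*m), hpw y (3*m), hpw x (m+n)]
    ring
  -- master identity for the right nucleus
  have key : ∀ (y : GaloisField p (g*(4*m))) (a : ZMod (g*(4*m))),
      c a * y ^ p ^ ((a + Jmap g m n).val)
        + c (a - Jmap g m n) * y ^ p ^ ((a - Jmap g m n).val)
        - (c (a - Jmap g m (3*m)) * v ^ p ^ ((a - Jmap g m (3*m)).val)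
              * y ^ p ^ ((a - Jmap g m (3*m) + Jmap g m (m+n)).val)
          + c (a - Jmap g m (m+n)) * v ^ p ^ ((a - Jmap g m (m+n)).val)
              * y ^ p ^ ((a - Jmap g m (m+n) + Jmap g m (3*m)).val))
      = (if a = 0 then (τ y) ^ p ^ (g*n) else 0) + (if a = Jmap g m n then τ y else 0)
        - v * ((if a = Jmap g m (3*m) then (τ y) ^ p ^ (g*(m+n)) else 0)
             + (if a = Jmap g m (m+n) then (τ y) ^ p ^ (g*(3*m)) else 0)) := by
    intro y a
    have hvan : ∀ x : GaloisField p (g*(4*m)),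
        ∑ b : ZMod (g*(4*m)),
          ((c b * y ^ p ^ ((b + Jmap g m n).val)
            + c (b - Jmap g m n) * y ^ p ^ ((b - Jmap g m n).val)
            - (c (b - Jmap g m (3*m)) * v ^ p ^ ((b - Jmap g m (3*m)).val)
                  * y ^ p ^ ((b - Jmap g m (3*m) + Jmap g m (m+n)).val)
              + c (b - Jmap g m (m+n)) * v ^ p ^ ((b - Jmap g m (m+n)).val)
                  * y ^ p ^ ((b - Jmap g m (m+n) + Jmap g m (3*m)).val)))
          - ((if b = 0 then (τ y) ^ p ^ (g*n) else 0) + (if b = Jmap g m n then τ y else 0)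
            - v * ((if b = Jmap g m (3*m) then (τ y) ^ p ^ (g*(m+n)) else 0)
                 + (if b = Jmap g m (m+n) then (τ y) ^ p ^ (g*(3*m)) else 0))))
          * x ^ p ^ b.val = 0 := by
      intro x
      have hL : μ (bierMul p g m n (p^g) v x y)
          = ∑ b : ZMod (g*(4*m)),
            (c b * y ^ p ^ ((b + Jmap g m n).val)
              + c (b - Jmap g m n) * y ^ p ^ ((b - Jmap g m n).val)
              - (c (b - Jmap g m (3*m)) * v ^ p ^ ((b - Jmap g m (3*m)).val)
                    * y ^ p ^ ((b - Jmap g m (3*m) + Jmap g m (m+n)).val)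
                + c (b - Jmap g m (m+n)) * v ^ p ^ ((b - Jmap g m (m+n)).val)
                    * y ^ p ^ ((b - Jmap g m (m+n) + Jmap g m (3*m)).val)))
            * x ^ p ^ b.val := by
        rw [hc (bierMul p g m n (p^g) v x y), Pc]
        calc ∑ i : ZMod (g*(4*m)), c i * (bierMul p g m n (p^g) v x y) ^ p ^ i.val
            = ∑ i : ZMod (g*(4*m)),
              ((c i * y ^ p ^ ((i + Jmap g m n).val)) * x ^ p ^ i.val
                + (c i * y ^ p ^ i.val) * x ^ p ^ ((i + Jmap g m n).val)
                - ((c i * v ^ p ^ i.val * y ^ p ^ ((i + Jmap g m (m+n)).val))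
                      * x ^ p ^ ((i + Jmap g m (3*m)).val)
                  + (c i * v ^ p ^ i.val * y ^ p ^ ((i + Jmap g m (3*m)).val))
                      * x ^ p ^ ((i + Jmap g m (m+n)).val))) :=
              Finset.sum_congr rfl (fun i _ => hterm x y i)
          _ = (∑ i : ZMod (g*(4*m)), (c i * y ^ p ^ ((i + Jmap g m n).val)) * x ^ p ^ i.val)
              + (∑ i : ZMod (g*(4*m)), (c i * y ^ p ^ i.val) * x ^ p ^ ((i + Jmap g m n).val))
              - ((∑ i : ZMod (g*(4*m)), (c i * v ^ p ^ i.val * y ^ p ^ ((i + Jmap g m (m+n)).val))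
                    * x ^ p ^ ((i + Jmap g m (3*m)).val))
                + (∑ i : ZMod (g*(4*m)), (c i * v ^ p ^ i.val * y ^ p ^ ((i + Jmap g m (3*m)).val))
                    * x ^ p ^ ((i + Jmap g m (m+n)).val))) := by
              rw [Finset.sum_sub_distrib, Finset.sum_add_distrib, Finset.sum_add_distrib]
          _ = (∑ b : ZMod (g*(4*m)), (c b * y ^ p ^ ((b + Jmap g m n).val)) * x ^ p ^ b.val)
              + (∑ b : ZMod (g*(4*m)),
                  (c (b - Jmap g m n) * y ^ p ^ ((b - Jmap g m n).val)) * x ^ p ^ b.val)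
              - ((∑ b : ZMod (g*(4*m)),
                  (c (b - Jmap g m (3*m)) * v ^ p ^ ((b - Jmap g m (3*m)).val)
                    * y ^ p ^ ((b - Jmap g m (3*m) + Jmap g m (m+n)).val)) * x ^ p ^ b.val)
                + (∑ b : ZMod (g*(4*m)),
                  (c (b - Jmap g m (m+n)) * v ^ p ^ ((b - Jmap g m (m+n)).val)
                    * y ^ p ^ ((b - Jmap g m (m+n) + Jmap g m (3*m)).val)) * x ^ p ^ b.val)) := by
              rw [sum_shift (fun i => c i * y ^ p ^ i.val) (Jmap g m n) x,
                sum_shift (fun i => c i * v ^ p ^ i.val * y ^ p ^ ((i + Jmap g m (m+n)).val))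
                  (Jmap g m (3*m)) x,
                sum_shift (fun i => c i * v ^ p ^ i.val * y ^ p ^ ((i + Jmap g m (3*m)).val))
                  (Jmap g m (m+n)) x]
          _ = _ := by
              rw [← Finset.sum_add_distrib, ← Finset.sum_add_distrib, ← Finset.sum_sub_distrib]
              exact Finset.sum_congr rfl (fun b _ => by ring)
      have hR : bierMul p g m n (p^g) v x (τ y)
          = ∑ b : ZMod (g*(4*m)),
            ((if b = 0 then (τ y) ^ p ^ (g*n) else 0) + (if b = Jmap g m n then τ y else 0)
              - v * ((if b = Jmap g m (3*m) then (τ y) ^ p ^ (g*(m+n)) else 0)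
                   + (if b = Jmap g m (m+n) then (τ y) ^ p ^ (g*(3*m)) else 0)))
            * x ^ p ^ b.val := by
        rw [bierMul]
        simp only [← pow_mul]
        rw [show (τ y) ^ p ^ (g*n) * x
              = (τ y) ^ p ^ (g*n) * x ^ p ^ ((0 : ZMod (g*(4*m))).val) by rw [hx0val],
          show (τ y) * x ^ p ^ (g*n) = (τ y) * x ^ p ^ ((Jmap g m n).val) by rw [hxval],
          show (τ y) ^ p ^ (g*(m+n)) * x ^ p ^ (g*(3*m))
              = (τ y) ^ p ^ (g*(m+n)) * x ^ p ^ ((Jmap g m (3*m)).val) by rw [hxval],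
          show (τ y) ^ p ^ (g*(3*m)) * x ^ p ^ (g*(m+n))
              = (τ y) ^ p ^ (g*(3*m)) * x ^ p ^ ((Jmap g m (m+n)).val) by rw [hxval]]
        rw [← sum_single (0 : ZMod (g*(4*m))) ((τ y) ^ p ^ (g*n)) x,
          ← sum_single (Jmap g m n) (τ y) x,
          ← sum_single (Jmap g m (3*m)) ((τ y) ^ p ^ (g*(m+n))) x,
          ← sum_single (Jmap g m (m+n)) ((τ y) ^ p ^ (g*(3*m))) x]
        rw [← Finset.sum_add_distrib, ← Finset.sum_add_distrib, Finset.mul_sum,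
          ← Finset.sum_sub_distrib]
        exact Finset.sum_congr rfl (fun b _ => by ring)
      rw [sum_sub_mul
        (fun b => (c b * y ^ p ^ ((b + Jmap g m n).val)
            + c (b - Jmap g m n) * y ^ p ^ ((b - Jmap g m n).val)
            - (c (b - Jmap g m (3*m)) * v ^ p ^ ((b - Jmap g m (3*m)).val)
                  * y ^ p ^ ((b - Jmap g m (3*m) + Jmap g m (m+n)).val)
              + c (b - Jmap g m (m+n)) * v ^ p ^ ((b - Jmap g m (m+n)).val)
                  * y ^ p ^ ((b - Jmap g m (m+n) + Jmap g m (3*m)).val))))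
        (fun b => ((if b = 0 then (τ y) ^ p ^ (g*n) else 0) + (if b = Jmap g m n then τ y else 0)
            - v * ((if b = Jmap g m (3*m) then (τ y) ^ p ^ (g*(m+n)) else 0)
                 + (if b = Jmap g m (m+n) then (τ y) ^ p ^ (g*(3*m)) else 0)))) x,
        ← hL, ← hR, hτ y x, sub_self]
    exact sub_eq_zero.mp (sum_vanish hvan a)
  by_cases hsp : n = 2*m
  · -- special case : m = 1, n = 2
    have hm1 : m = 1 := by
      have hgm : Nat.gcd m n = m := by
        rw [hsp]; exact Nat.gcd_eq_left ⟨2, by ring⟩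
      omega
    subst hm1
    have hn2' : n = 2 := by omega
    subst hn2'
    simp only [show (3*1:ℕ) = 3 from by norm_num, show (1+2:ℕ) = 3 from by norm_num] at key
    have s1 : Jmap g 1 2 ≠ 0 := by
      rw [← Jmap_zero g 1, Ne, hJ]; omega
    have s2 : Jmap g 1 3 ≠ 0 := by
      rw [← Jmap_zero g 1, Ne, hJ]; omega
    have s3 : Jmap g 1 1 ≠ 0 := by
      rw [← Jmap_zero g 1, Ne, hJ]; omega
    have s4 : Jmap g 1 2 ≠ Jmap g 1 3 := by rw [Ne, hJ]; omega
    have s5 : Jmap g 1 1 ≠ Jmap g 1 2 := by rw [Ne, hJ]; omega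
    have s6 : Jmap g 1 1 ≠ Jmap g 1 3 := by rw [Ne, hJ]; omega
    have s7 : Jmap g 1 2 + Jmap g 1 2 = 0 := by
      rw [Jmap_add, ← Jmap_zero g 1, hJ]
    have s8 : Jmap g 1 1 + Jmap g 1 2 = Jmap g 1 3 := by
      rw [Jmap_add]
    have s9 : Jmap g 1 3 + Jmap g 1 1 = 0 := by
      rw [Jmap_add, ← Jmap_zero g 1, hJ]
    have s10 : Jmap g 1 3 + Jmap g 1 3 = Jmap g 1 2 := by
      rw [Jmap_add, hJ]
    have s11 : Jmap g 1 3 + Jmap g 1 2 = Jmap g 1 1 := by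
      rw [Jmap_add, hJ]
    have hneg2 : ∀ b : ZMod (g*(4*1)), b - Jmap g 1 2 = b + Jmap g 1 2 := by
      intro b
      rw [sub_eq_add_neg]
      congr 1
      rw [neg_eq_iff_add_eq_zero]
      exact s7
    have hstep1 : ∀ a : ZMod (g*(4*1)), a ≠ 0 → a ≠ Jmap g 1 2 → a ≠ Jmap g 1 3 →
        (c a + c (a + Jmap g 1 2) = 0 ∧ c (a - Jmap g 1 3) = 0) := by
      intro a ha0 ha2 ha3
      have h0 : ∀ b : ZMod (g*(4*1)),
          (if b = a + Jmap g 1 2 then c a + c (a + Jmap g 1 2) else 0)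
            - (if b = a then 2 * (c (a - Jmap g 1 3) * v ^ p ^ ((a - Jmap g 1 3).val)) else 0)
          = 0 := by
        apply sum_vanish
        intro y
        rw [sum_sub_mul
          (fun b => if b = a + Jmap g 1 2 then c a + c (a + Jmap g 1 2) else 0)
          (fun b => if b = a then 2 * (c (a - Jmap g 1 3) * v ^ p ^ ((a - Jmap g 1 3).val)) else 0) y,
          sum_single, sum_single]
        have h := key y a
        rw [if_neg ha0, if_neg ha2, if_neg ha3] at h
        rw [sub_add_cancel, hneg2 a] at h
        linear_combination h
      have hpa : c a + c (a + Jmap g 1 2) = 0 := by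
        have h := h0 (a + Jmap g 1 2)
        rw [if_pos rfl, if_neg (show ¬ a + Jmap g 1 2 = a from
          fun hh => s1 (by linear_combination hh))] at h
        simpa using h
      have ha3' : c (a - Jmap g 1 3) = 0 := by
        have h := h0 a
        rw [if_neg (show ¬ a = a + Jmap g 1 2 from
          fun hh => s1 (by linear_combination -hh)), if_pos rfl] at h
        have h2 : (2:GaloisField p (g*(4*1)))
            * (c (a - Jmap g 1 3) * v ^ p ^ ((a - Jmap g 1 3).val)) = 0 := by
          linear_combination -h
        rcases mul_eq_zero.mp h2 with h' | h'
        · exact absurd h' h2F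
        · rcases mul_eq_zero.mp h' with h'' | h''
          · exact h''
          · exact absurd h'' (pow_ne_zero _ hv0)
      exact ⟨hpa, ha3'⟩
    have kill0 : ∀ b : ZMod (g*(4*1)), b ≠ 0 → b ≠ Jmap g 1 1 → b ≠ Jmap g 1 3 →
        c b = 0 := by
      intro b hb0 hb1 hb3
      have h := (hstep1 (b + Jmap g 1 3)
        (fun hh => hb1 (by linear_combination hh - s9))
        (fun hh => hb3 (by linear_combination hh - s10))
        (fun hh => hb0 (by linear_combination hh))).2
      rwa [add_sub_cancel_right] at h
    have hpair : c (Jmap g 1 1) + c (Jmap g 1 3) = 0 := by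
      have h := (hstep1 (Jmap g 1 1) s3 s5 s6).1
      rwa [s8] at h
    have hτeq : ∀ y, τ y = c 0 ^ p ^ g * y := by
      intro y
      have h := key y (Jmap g 1 3)
      rw [if_neg s2, if_neg (Ne.symm s4), if_pos rfl] at h
      rw [s11, show Jmap g 1 3 - Jmap g 1 2 = Jmap g 1 1 from by linear_combination -s8,
        sub_self, zero_add, hx0val v] at h
      have h2 : (2:GaloisField p (g*(4*1))) * (v * (τ y) ^ p ^ (g*3))
          = 2 * (v * (c 0 * y ^ p ^ ((Jmap g 1 3).val))) := by
        linear_combination h - y ^ p ^ ((Jmap g 1 1).val) * hpair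
      have h3 := mul_left_cancel₀ hv0 (mul_left_cancel₀ h2F h2)
      rw [hxval y 3] at h3
      have hw : (c 0 ^ p ^ g * y) ^ p ^ (g*3) = c 0 * y ^ p ^ (g*3) := by
        rw [mul_pow, ← pow_mul, ← pow_add, show g + g*3 = g*(4*1) from by ring, gpow_card]
      have hinj : Function.Injective (iterateFrobenius (GaloisField p (g*(4*1))) p (g*3)) :=
        (iterateFrobenius (GaloisField p (g*(4*1))) p (g*3)).injective
      apply hinj
      simp only [iterateFrobenius_def]
      rw [h3, hw]
    have hcJ2 : c (Jmap g 1 2) = 0 := kill0 _ s1 (Ne.symm s5) s4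
    have h0' : ∀ b : ZMod (g*(4*1)),
        (if b = 0 then c 0 - c 0 ^ p ^ g else 0)
          - (if b = Jmap g 1 2 then 2 * (c (Jmap g 1 3) * v ^ p ^ ((Jmap g 1 3).val)) else 0)
        = 0 := by
      apply sum_vanish
      intro y
      rw [sum_sub_mul
        (fun b => if b = 0 then c 0 - c 0 ^ p ^ g else 0)
        (fun b => if b = Jmap g 1 2 then 2 * (c (Jmap g 1 3) * v ^ p ^ ((Jmap g 1 3).val)) else 0) y,
        sum_single, sum_single, hx0val y]
      have h := key y (Jmap g 1 2)
      rw [if_neg s1, if_pos rfl, if_neg s4] at h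
      rw [hcJ2, sub_self, hx0val y,
        show Jmap g 1 2 - Jmap g 1 3 = Jmap g 1 3 from by linear_combination -s10, s10,
        hτeq y] at h
      linear_combination h
    have hfin : c 0 ^ p ^ g = c 0 := by
      have h := h0' 0
      rw [if_pos rfl, if_neg (Ne.symm s1)] at h
      have h2 : c 0 - c 0 ^ p ^ g = 0 := by simpa using h
      linear_combination -h2
    have hcJ3 : c (Jmap g 1 3) = 0 := by
      have h := h0' (Jmap g 1 2)
      rw [if_neg s1, if_pos rfl] at h
      have h2 : (2:GaloisField p (g*(4*1)))
          * (c (Jmap g 1 3) * v ^ p ^ ((Jmap g 1 3).val)) = 0 := by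
        linear_combination -h
      rcases mul_eq_zero.mp h2 with h' | h'
      · exact absurd h' h2F
      · rcases mul_eq_zero.mp h' with h'' | h''
        · exact h''
        · exact absurd h'' (pow_ne_zero _ hv0)
    have hcJ1 : c (Jmap g 1 1) = 0 := by
      have := hpair
      rw [hcJ3, add_zero] at this
      exact this
    have kill : ∀ b : ZMod (g*(4*1)), b ≠ 0 → c b = 0 := by
      intro b hb0
      by_cases hb1 : b = Jmap g 1 1
      · rw [hb1]; exact hcJ1
      · by_cases hb3 : b = Jmap g 1 3
        · rw [hb3]; exact hcJ3
        · exact kill0 b hb0 hb1 hb3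
    refine ⟨c 0, hfin, ?_⟩
    intro x
    rw [hc x, Pc, Finset.sum_eq_single 0]
    · rw [hx0val]
    · intro b _ hb; rw [kill b hb, zero_mul]
    · intro h; exact absurd (Finset.mem_univ 0) h
  · -- generic case
    have f1 : Jmap g m n ≠ 0 := by
      rw [← Jmap_zero g m, Ne, hJ, hred n (by omega), hred 0 (by omega)]
      split_ifs <;> omega
    have f2 : Jmap g m (3*m) ≠ 0 := by
      rw [← Jmap_zero g m, Ne, hJ, hred (3*m) (by omega), hred 0 (by omega)]
      split_ifs <;> omega
    have f4 : Jmap g m n ≠ Jmap g m (3*m) := by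
      rw [Ne, hJ, hred n (by omega), hred (3*m) (by omega)]; split_ifs <;> omega
    have f5 : Jmap g m n ≠ Jmap g m (m+n) := by
      rw [Ne, hJ, hred n (by omega), hred (m+n) (by omega)]; split_ifs <;> omega
    have f6 : Jmap g m (3*m) ≠ Jmap g m (m+n) := by
      rw [Ne, hJ, hred (3*m) (by omega), hred (m+n) (by omega)]; split_ifs <;> omega
    have f7a : Jmap g m (n+3*m) ≠ 0 := by
      rw [← Jmap_zero g m, Ne, hJ, hred (n+3*m) (by omega), hred 0 (by omega)]
      split_ifs <;> omega
    have f7b : Jmap g m (n+3*m) ≠ Jmap g m n := by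
      rw [Ne, hJ, hred (n+3*m) (by omega), hred n (by omega)]; split_ifs <;> omega
    have f7c : Jmap g m (n+3*m) ≠ Jmap g m (3*m) := by
      rw [Ne, hJ, hred (n+3*m) (by omega), hred (3*m) (by omega)]; split_ifs <;> omega
    have f7d : Jmap g m (n+3*m) ≠ Jmap g m (m+n) := by
      rw [Ne, hJ, hred (n+3*m) (by omega), hred (m+n) (by omega)]; split_ifs <;> omega
    have f8a : Jmap g m (m+2*n) ≠ 0 := by
      rw [← Jmap_zero g m, Ne, hJ, hred (m+2*n) (by omega), hred 0 (by omega)]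
      split_ifs <;> omega
    have f8b : Jmap g m (m+2*n) ≠ Jmap g m n := by
      rw [Ne, hJ, hred (m+2*n) (by omega), hred n (by omega)]; split_ifs <;> omega
    have f8c : Jmap g m (m+2*n) ≠ Jmap g m (3*m) := by
      rw [Ne, hJ, hred (m+2*n) (by omega), hred (3*m) (by omega)]; split_ifs <;> omega
    have f8d : Jmap g m (m+2*n) ≠ Jmap g m (m+n) := by
      rw [Ne, hJ, hred (m+2*n) (by omega), hred (m+n) (by omega)]; split_ifs <;> omega
    have f9 : Jmap g m (2*n) ≠ 0 := by
      rw [← Jmap_zero g m, Ne, hJ, hred (2*n) (by omega), hred 0 (by omega)]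
      split_ifs <;> omega
    have f9' : Jmap g m (2*(m+n)) ≠ Jmap g m (6*m) := by
      rw [Ne, hJ, hred (2*(m+n)) (by omega), hred (6*m) (by omega)]; split_ifs <;> omega
    have eJ2n : Jmap g m n + Jmap g m n = Jmap g m (2*n) := by
      rw [Jmap_add, show n+n = 2*n from by ring]
    have eJn3m : Jmap g m n + Jmap g m (3*m) = Jmap g m (n+3*m) := Jmap_add g m n (3*m)
    have eJm2n : Jmap g m n + Jmap g m (m+n) = Jmap g m (m+2*n) := by
      rw [Jmap_add, show n+(m+n) = m+2*n from by ring]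
    have eJ2mn : Jmap g m (m+n) + Jmap g m (m+n) = Jmap g m (2*(m+n)) := by
      rw [Jmap_add, show (m+n)+(m+n) = 2*(m+n) from by ring]
    have eJ6m : Jmap g m (3*m) + Jmap g m (3*m) = Jmap g m (6*m) := by
      rw [Jmap_add, show 3*m+3*m = 6*m from by ring]
    have eJ0 : Jmap g m 0 = 0 := Jmap_zero g m
    have g12 : ∀ a : ZMod (g*(4*m)), a + Jmap g m n ≠ a - Jmap g m n := by
      intro a h
      apply f9
      rw [← eJ0]
      rw [eJ0]
      linear_combination h - eJ2n
    have g13 : ∀ a : ZMod (g*(4*m)),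
        a + Jmap g m n ≠ a - Jmap g m (3*m) + Jmap g m (m+n) := by
      intro a h
      apply f7d
      linear_combination h - eJn3m
    have g14 : ∀ a : ZMod (g*(4*m)),
        a + Jmap g m n ≠ a - Jmap g m (m+n) + Jmap g m (3*m) := by
      intro a h
      apply f8c
      linear_combination h - eJm2n
    have g23 : ∀ a : ZMod (g*(4*m)),
        a - Jmap g m n ≠ a - Jmap g m (3*m) + Jmap g m (m+n) := by
      intro a h
      apply f8c
      linear_combination -h - eJm2n
    have g24 : ∀ a : ZMod (g*(4*m)),
        a - Jmap g m n ≠ a - Jmap g m (m+n) + Jmap g m (3*m) := by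
      intro a h
      apply f7d
      linear_combination -h - eJn3m
    have g34 : ∀ a : ZMod (g*(4*m)),
        a - Jmap g m (3*m) + Jmap g m (m+n) ≠ a - Jmap g m (m+n) + Jmap g m (3*m) := by
      intro a h
      apply f9'
      linear_combination h - eJ2mn + eJ6m
    have hstep1 : ∀ a : ZMod (g*(4*m)), a ≠ 0 → a ≠ Jmap g m n → a ≠ Jmap g m (3*m) →
        a ≠ Jmap g m (m+n) →
        c a = 0 ∧ c (a - Jmap g m n) = 0 ∧ c (a - Jmap g m (3*m)) = 0
          ∧ c (a - Jmap g m (m+n)) = 0 := by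
      intro a ha0 ha1 ha2 ha3
      have h0 : ∀ b : ZMod (g*(4*m)),
          ((if b = a + Jmap g m n then c a else 0)
            + (if b = a - Jmap g m n then c (a - Jmap g m n) else 0))
            - ((if b = a - Jmap g m (3*m) + Jmap g m (m+n)
                then c (a - Jmap g m (3*m)) * v ^ p ^ ((a - Jmap g m (3*m)).val) else 0)
             + (if b = a - Jmap g m (m+n) + Jmap g m (3*m)
                then c (a - Jmap g m (m+n)) * v ^ p ^ ((a - Jmap g m (m+n)).val) else 0))
          = 0 := by
        apply sum_vanish
        intro y
        rw [sum_sub_mul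
          (fun b => (if b = a + Jmap g m n then c a else 0)
            + (if b = a - Jmap g m n then c (a - Jmap g m n) else 0))
          (fun b => (if b = a - Jmap g m (3*m) + Jmap g m (m+n)
                then c (a - Jmap g m (3*m)) * v ^ p ^ ((a - Jmap g m (3*m)).val) else 0)
             + (if b = a - Jmap g m (m+n) + Jmap g m (3*m)
                then c (a - Jmap g m (m+n)) * v ^ p ^ ((a - Jmap g m (m+n)).val) else 0)) y,
          sum_add_mul (fun b => (if b = a + Jmap g m n then c a else 0))
            (fun b => (if b = a - Jmap g m n then c (a - Jmap g m n) else 0)) y,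
          sum_add_mul
            (fun b => (if b = a - Jmap g m (3*m) + Jmap g m (m+n)
                then c (a - Jmap g m (3*m)) * v ^ p ^ ((a - Jmap g m (3*m)).val) else 0))
            (fun b => (if b = a - Jmap g m (m+n) + Jmap g m (3*m)
                then c (a - Jmap g m (m+n)) * v ^ p ^ ((a - Jmap g m (m+n)).val) else 0)) y,
          sum_single, sum_single, sum_single, sum_single]
        have h := key y a
        rw [if_neg ha0, if_neg ha1, if_neg ha2, if_neg ha3] at h
        linear_combination h
      refine ⟨?_, ?_, ?_, ?_⟩
      · have h := h0 (a + Jmap g m n)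
        rw [if_pos rfl, if_neg (g12 a), if_neg (g13 a), if_neg (g14 a)] at h
        simpa using h
      · have h := h0 (a - Jmap g m n)
        rw [if_neg (Ne.symm (g12 a)), if_pos rfl, if_neg (g23 a), if_neg (g24 a)] at h
        simpa using h
      · have h := h0 (a - Jmap g m (3*m) + Jmap g m (m+n))
        rw [if_neg (Ne.symm (g13 a)), if_neg (Ne.symm (g23 a)), if_pos rfl,
          if_neg (g34 a)] at h
        have h2 : c (a - Jmap g m (3*m)) * v ^ p ^ ((a - Jmap g m (3*m)).val) = 0 := by
          simpa using h
        rcases mul_eq_zero.mp h2 with h' | h'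
        · exact h'
        · exact absurd h' (pow_ne_zero _ hv0)
      · have h := h0 (a - Jmap g m (m+n) + Jmap g m (3*m))
        rw [if_neg (Ne.symm (g14 a)), if_neg (Ne.symm (g24 a)), if_neg (Ne.symm (g34 a)),
          if_pos rfl] at h
        have h2 : c (a - Jmap g m (m+n)) * v ^ p ^ ((a - Jmap g m (m+n)).val) = 0 := by
          simpa using h
        rcases mul_eq_zero.mp h2 with h' | h'
        · exact h'
        · exact absurd h' (pow_ne_zero _ hv0)
    have kill : ∀ a : ZMod (g*(4*m)), a ≠ 0 → c a = 0 := by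
      intro a ha0
      by_cases h1 : a = Jmap g m n
      · subst h1
        have h := (hstep1 (Jmap g m (n+3*m)) f7a f7b f7c f7d).2.2.1
        rwa [show Jmap g m (n+3*m) - Jmap g m (3*m) = Jmap g m n from by
          rw [← Jmap_add g m n (3*m)]; exact add_sub_cancel_right _ _] at h
      · by_cases h2 : a = Jmap g m (3*m)
        · subst h2
          have h := (hstep1 (Jmap g m (n+3*m)) f7a f7b f7c f7d).2.1
          rwa [show Jmap g m (n+3*m) - Jmap g m n = Jmap g m (3*m) from by
            rw [← Jmap_add g m n (3*m)]; exact add_sub_cancel_left _ _] at h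
        · by_cases h3 : a = Jmap g m (m+n)
          · subst h3
            have h := (hstep1 (Jmap g m (m+2*n)) f8a f8b f8c f8d).2.1
            rwa [show Jmap g m (m+2*n) - Jmap g m n = Jmap g m (m+n) from by
              rw [show m+2*n = (m+n)+n from by ring, ← Jmap_add g m (m+n) n]
              exact add_sub_cancel_right _ _] at h
          · exact (hstep1 a ha0 h1 h2 h3).1
    have hτ1 : ∀ y, c 0 * y = τ y := by
      intro y
      have h := key y (Jmap g m n)
      rw [if_neg f1, if_pos rfl, if_neg f4, if_neg f5] at h
      rw [kill (Jmap g m n) f1, sub_self, hx0val y,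
        kill (Jmap g m n - Jmap g m (3*m)) (sub_ne_zero_of_ne f4),
        kill (Jmap g m n - Jmap g m (m+n)) (sub_ne_zero_of_ne f5)] at h
      linear_combination h
    have hTn : c 0 ^ p ^ (g*n) = c 0 := by
      have h := key 1 0
      rw [if_pos rfl, if_neg (Ne.symm f1), if_neg (Ne.symm f2),
        if_neg (show (0:ZMod (g*(4*m))) ≠ Jmap g m (m+n) from by
          rw [← Jmap_zero g m, Ne, hJ, hred 0 (by omega), hred (m+n) (by omega)]
          split_ifs <;> omega)] at h
      rw [zero_sub, zero_sub, zero_sub,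
        kill (-Jmap g m n) (neg_ne_zero.mpr f1),
        kill (-Jmap g m (3*m)) (neg_ne_zero.mpr f2),
        kill (-Jmap g m (m+n)) (neg_ne_zero.mpr (show Jmap g m (m+n) ≠ 0 from by
          rw [← Jmap_zero g m, Ne, hJ, hred (m+n) (by omega), hred 0 (by omega)]
          split_ifs <;> omega))] at h
      rw [← hτ1 1, mul_one, one_pow] at h
      linear_combination -h
    have hTmn : c 0 ^ p ^ (g*(m+n)) = c 0 := by
      have h := key 1 (Jmap g m (3*m))
      rw [if_neg f2, if_neg (Ne.symm f4), if_pos rfl, if_neg f6] at h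
      rw [kill (Jmap g m (3*m)) f2,
        kill (Jmap g m (3*m) - Jmap g m n) (sub_ne_zero_of_ne (Ne.symm f4)),
        kill (Jmap g m (3*m) - Jmap g m (m+n)) (sub_ne_zero_of_ne f6),
        sub_self, hx0val v, ← hτ1 1, mul_one, one_pow] at h
      have h2 : v * (c 0 ^ p ^ (g*(m+n))) = v * c 0 := by
        linear_combination h
      exact mul_left_cancel₀ hv0 h2
    have hfixn : c 0 ^ (p^g) ^ n = c 0 := by rw [← pow_mul]; exact hTn
    have hfixmn : c 0 ^ (p^g) ^ (m+n) = c 0 := by rw [← pow_mul]; exact hTmn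
    have hfix := pow_gcd_fix (c 0) (p^g) n (m+n) hfixn hfixmn
    rw [Nat.gcd_add_self_right, Nat.gcd_comm, hgcd, pow_one] at hfix
    refine ⟨c 0, hfix, ?_⟩
    intro x
    rw [hc x, Pc, Finset.sum_eq_single 0]
    · rw [hx0val]
    · intro b _ hb; rw [kill b hb, zero_mul]
    · intro h; exact absurd (Finset.mem_univ 0) h


lemma mid_easy (p g m n : ℕ) [Fact p.Prime] (hm : Odd m) (hn : Even n)
    (v : GaloisField p (g * (4 * m))) (l : GaloisField p (g * (4 * m)))
    (hl : l ^ (p^g) ^ 2 = l) (x y : GaloisField p (g * (4 * m))) :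
    bierMul p g m n (p^g) v (l * x) y = bierMul p g m n (p^g) v x (l * y) := by
  have hE : ∀ j : ℕ, l ^ ((p^g)^2)^j = l := by
    intro j
    induction j with
    | zero => simp
    | succ j ih => rw [pow_succ, pow_mul, ih, hl]
  have hEven : ∀ k : ℕ, Even k → l ^ (p^g)^k = l := by
    intro k hk
    obtain ⟨r, hr⟩ := hk
    have hk2 : k = 2*r := by omega
    rw [hk2, pow_mul (p^g) 2 r, hE r]
  have hOdd : ∀ k : ℕ, Odd k → l ^ (p^g)^k = l ^ (p^g) := by
    intro k hk
    obtain ⟨r, hr⟩ := hk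
    rw [hr, pow_succ (p^g) (2*r), pow_mul (p^g) 2 r,
      pow_mul l (((p^g)^2)^r) (p^g), hE r]
  have h3m : Odd (3*m) := Odd.mul ⟨1, by norm_num⟩ hm
  have hmn : Odd (m+n) := hm.add_even hn
  rw [bierMul, bierMul, mul_pow, mul_pow, mul_pow, mul_pow, mul_pow, mul_pow,
    hEven n hn, hOdd (3*m) h3m, hOdd (m+n) hmn]
  ring

lemma right_easy (p g m n : ℕ) [Fact p.Prime]
    (v : GaloisField p (g * (4 * m))) (l : GaloisField p (g * (4 * m)))
    (hl : l ^ (p^g) = l) (x y : GaloisField p (g * (4 * m))) :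
    l * bierMul p g m n (p^g) v x y = bierMul p g m n (p^g) v x (l * y) := by
  have hAll : ∀ k : ℕ, l ^ (p^g)^k = l := by
    intro k
    induction k with
    | zero => simp
    | succ k ih => rw [pow_succ, pow_mul, ih, hl]
  rw [bierMul, bierMul, mul_pow, mul_pow, mul_pow, hAll n, hAll (3*m), hAll (m+n)]
  ring


lemma card_scalar_set (p N Q : ℕ) [Fact p.Prime] [NeZero N] :
    Nat.card {ψ : GaloisField p N →ₗ[ZMod p] GaloisField p N |
        ∃ l : GaloisField p N, l ^ Q = l ∧ ∀ x, ψ x = l * x}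
      = Nat.card {l : GaloisField p N | l ^ Q = l} := by
  apply Nat.card_congr
  refine
    { toFun := fun ψ => ⟨ψ.1 1, ?_⟩
      invFun := fun l => ⟨LinearMap.mulLeft (ZMod p) l.1, ⟨l.1, l.2, fun x => ?_⟩⟩
      left_inv := ?_
      right_inv := ?_ }
  · obtain ⟨l, hl, h⟩ := ψ.2
    simp only [Set.mem_setOf_eq]
    rw [h 1, mul_one]
    exact hl
  · simp [LinearMap.mulLeft_apply]
  · intro ψ
    apply Subtype.ext
    apply LinearMap.ext
    intro x
    obtain ⟨l, hl, h⟩ := ψ.2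
    simp only [LinearMap.mulLeft_apply]
    rw [h 1, h x, mul_one]
  · intro l
    apply Subtype.ext
    simp [LinearMap.mulLeft_apply]

end S17

theorem statement17 (p g m n q : ℕ) [Fact p.Prime] (hp : Odd p) (hg : 0 < g)
    (hq : q = p ^ g) (hq4 : q % 4 = 1) (hm : Odd m) (hn : Even n)
    (hn0 : 0 < n) (hn4 : n < 4 * m) (hgcd : Nat.gcd m n = 1)
    -- `u` is a primitive element of `F_{q^{4m}}` and `v = u^{q^m − 1}`
    (u v : GaloisField p (g * (4 * m))) (hu0 : u ≠ 0)
    (huprim : ∀ x : GaloisField p (g * (4 * m)), x ≠ 0 → ∃ i : ℕ, x = u ^ i)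
    (hv : v = u ^ (q ^ m - 1)) :
    -- the middle-nucleus set is the set of scalar maps by elements of `F_{q²}`
    {ψ : GaloisField p (g * (4 * m)) →ₗ[ZMod p] GaloisField p (g * (4 * m)) |
        ∀ y, ∃ z, ∀ x, bierMul p g m n q v (ψ x) y = bierMul p g m n q v x z} =
      {ψ : GaloisField p (g * (4 * m)) →ₗ[ZMod p] GaloisField p (g * (4 * m)) |
        ∃ l : GaloisField p (g * (4 * m)), l ^ q ^ 2 = l ∧ ∀ x, ψ x = l * x} ∧
    -- hence it has exactly q² elements
    Nat.card {ψ : GaloisField p (g * (4 * m)) →ₗ[ZMod p] GaloisField p (g * (4 * m)) |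
        ∀ y, ∃ z, ∀ x, bierMul p g m n q v (ψ x) y = bierMul p g m n q v x z} = q ^ 2 ∧
    -- the right-nucleus set is the set of scalar maps by elements of `F_q`
    {μ : GaloisField p (g * (4 * m)) →ₗ[ZMod p] GaloisField p (g * (4 * m)) |
        ∀ y, ∃ z, ∀ x, μ (bierMul p g m n q v x y) = bierMul p g m n q v x z} =
      {μ : GaloisField p (g * (4 * m)) →ₗ[ZMod p] GaloisField p (g * (4 * m)) |
        ∃ l : GaloisField p (g * (4 * m)), l ^ q = l ∧ ∀ x, μ x = l * x} ∧
    -- hence it has exactly q elements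
    Nat.card {μ : GaloisField p (g * (4 * m)) →ₗ[ZMod p] GaloisField p (g * (4 * m)) |
        ∀ y, ∃ z, ∀ x, μ (bierMul p g m n q v x y) = bierMul p g m n q v x z} = q := by
  subst hq
  have hmpos : 0 < m := hm.pos
  haveI : NeZero (g * (4 * m)) := ⟨Nat.pos_iff_ne_zero.mp (by positivity)⟩
  have hp2 : p ≠ 2 := by
    have := Nat.odd_iff.mp hp
    omega
  have hv0 : v ≠ 0 := by
    rw [hv]
    exact pow_ne_zero _ hu0
  have hp1 : 1 < p := (Fact.out : p.Prime).one_lt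
  have hpg1 : 1 < p ^ g := Nat.one_lt_pow (by omega) hp1
  have hset1 : {ψ : GaloisField p (g * (4 * m)) →ₗ[ZMod p] GaloisField p (g * (4 * m)) |
        ∀ y, ∃ z, ∀ x, bierMul p g m n (p^g) v (ψ x) y = bierMul p g m n (p^g) v x z} =
      {ψ : GaloisField p (g * (4 * m)) →ₗ[ZMod p] GaloisField p (g * (4 * m)) |
        ∃ l : GaloisField p (g * (4 * m)), l ^ (p^g) ^ 2 = l ∧ ∀ x, ψ x = l * x} := by
    ext ψ
    simp only [Set.mem_setOf_eq]
    constructor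
    · intro hψ
      exact S17.mid_hard p g m n hg hp2 hm hn hn0 hn4 hgcd v hv0 ψ hψ
    · rintro ⟨l, hl, hψl⟩ y
      exact ⟨l * y, fun x => by
        rw [hψl x]; exact S17.mid_easy p g m n hm hn v l hl x y⟩
  have hset2 : {μ : GaloisField p (g * (4 * m)) →ₗ[ZMod p] GaloisField p (g * (4 * m)) |
        ∀ y, ∃ z, ∀ x, μ (bierMul p g m n (p^g) v x y) = bierMul p g m n (p^g) v x z} =
      {μ : GaloisField p (g * (4 * m)) →ₗ[ZMod p] GaloisField p (g * (4 * m)) |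
        ∃ l : GaloisField p (g * (4 * m)), l ^ (p^g) = l ∧ ∀ x, μ x = l * x} := by
    ext μ
    simp only [Set.mem_setOf_eq]
    constructor
    · intro hμ
      exact S17.right_hard p g m n hg hp2 hm hn hn0 hn4 hgcd v hv0 μ hμ
    · rintro ⟨l, hl, hμl⟩ y
      exact ⟨l * y, fun x => by
        rw [hμl]; exact S17.right_easy p g m n v l hl x y⟩
  refine ⟨hset1, ?_, hset2, ?_⟩
  · rw [hset1, S17.card_scalar_set p (g*(4*m)) ((p^g)^2)]
    apply S17.count_fixed u hu0 huprim ((p^g)^2)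
    · exact Nat.one_lt_pow (by omega) hpg1
    · have h := Nat.sub_dvd_pow_sub_pow ((p^g)^2) 1 (2*m)
      rw [one_pow] at h
      rwa [show ((p^g)^2)^(2*m) = p^(g*(4*m)) from by
        rw [← pow_mul, ← pow_mul, show g*(2*(2*m)) = g*(4*m) from by ring]] at h
  · rw [hset2, S17.card_scalar_set p (g*(4*m)) (p^g)]
    apply S17.count_fixed u hu0 huprim (p^g)
    · exact hpg1
    · have h := Nat.sub_dvd_pow_sub_pow (p^g) 1 (4*m)
      rw [one_pow] at h
      rwa [show (p^g)^(4*m) = p^(g*(4*m)) from by rw [← pow_mul]] at h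
end
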